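/- arXiv:1502.05433 — 8 statements merged into one kernel-verified Lean document; each statement's English description precedes it below -/
import Mathlib

section
/- Let S be a finite index set, let {R_ℓ}_{ℓ∈S} be M×M complex Hermitian positive semidefinite matrices, let c > 0, and let k ∈ S. Suppose R_k·R_ℓ = 0 for every ℓ ∈ S with ℓ ≠ k. Then (Σ_{ℓ∈S} R_ℓ + c·I)⁻¹·R_k = (R_k + c·I)⁻¹·R_k = R_k·(R_k + c·I)⁻¹. -/
open scoped ComplexOrder

lemma smul_one_posDef {M : ℕ} {c : ℝ} (hc : 0 < c) :
    ((c : ℂ) • (1 : Matrix (Fin M) (Fin M) ℂ)).PosDef := by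
  rw [Matrix.posDef_iff_dotProduct_mulVec]
  constructor
  · unfold Matrix.IsHermitian
    rw [Matrix.conjTranspose_smul, Matrix.conjTranspose_one]
    simp [Complex.conj_ofReal]
  · intro x hx
    rw [Matrix.smul_mulVec, Matrix.one_mulVec, dotProduct_smul]
    exact mul_pos (by exact_mod_cast hc) (Matrix.dotProduct_star_self_pos_iff.mpr hx)

/-- If `R k * R ℓ = 0` for every `ℓ ∈ S` with `ℓ ≠ k`, then
`(∑_{ℓ ∈ S} R ℓ + c • I)⁻¹ * R k = (R k + c • I)⁻¹ * R k = R k * (R k + c • I)⁻¹`. -/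
theorem inv_sum_mul_eq_of_orthogonal
    {M : ℕ} {ι : Type*} [DecidableEq ι] (S : Finset ι)
    (R : ι → Matrix (Fin M) (Fin M) ℂ)
    (hR : ∀ ℓ ∈ S, (R ℓ).PosSemidef)
    (c : ℝ) (hc : 0 < c) (k : ι) (hk : k ∈ S)
    (horth : ∀ ℓ ∈ S, ℓ ≠ k → R k * R ℓ = 0) :
    (∑ ℓ ∈ S, R ℓ + (c : ℂ) • (1 : Matrix (Fin M) (Fin M) ℂ))⁻¹ * R k =
      (R k + (c : ℂ) • (1 : Matrix (Fin M) (Fin M) ℂ))⁻¹ * R k ∧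
    (R k + (c : ℂ) • (1 : Matrix (Fin M) (Fin M) ℂ))⁻¹ * R k =
      R k * (R k + (c : ℂ) • (1 : Matrix (Fin M) (Fin M) ℂ))⁻¹ := by
  set I1 : Matrix (Fin M) (Fin M) ℂ := 1
  set A := ∑ ℓ ∈ S, R ℓ + (c : ℂ) • I1 with hA
  set B := R k + (c : ℂ) • I1 with hB
  have hApd : A.PosDef :=
    Matrix.PosDef.posSemidef_add (Finset.sum_induction R Matrix.PosSemidef (fun a b ha hb => ha.add hb)
      (Matrix.PosSemidef.zero) hR)
      (smul_one_posDef hc)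
  have hBpd : B.PosDef :=
    Matrix.PosDef.posSemidef_add (hR k hk) (smul_one_posDef hc)
  have hAinv : A⁻¹ * A = I1 := Matrix.nonsing_inv_mul _
    (Matrix.isUnit_iff_isUnit_det _ |>.mp hApd.isUnit)
  have hBinv : B * B⁻¹ = I1 := Matrix.mul_nonsing_inv _
    (Matrix.isUnit_iff_isUnit_det _ |>.mp hBpd.isUnit)
  have hBinv' : B⁻¹ * B = I1 := Matrix.nonsing_inv_mul _
    (Matrix.isUnit_iff_isUnit_det _ |>.mp hBpd.isUnit)
  -- R ℓ * R k = 0 for ℓ ≠ k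
  have horth' : ∀ ℓ ∈ S, ℓ ≠ k → R ℓ * R k = 0 := by
    intro ℓ hℓ hne
    have h1 := congrArg Matrix.conjTranspose (horth ℓ hℓ hne)
    rwa [Matrix.conjTranspose_mul, (hR ℓ hℓ).isHermitian.eq, (hR k hk).isHermitian.eq,
      Matrix.conjTranspose_zero] at h1
  -- R k commutes with B⁻¹
  have hcomm : R k * B = B * R k := by
    rw [hB]; simp [I1, mul_add, add_mul, Matrix.mul_smul, Matrix.smul_mul]
  have hcommInv : B⁻¹ * R k = R k * B⁻¹ := by
    calc B⁻¹ * R k = B⁻¹ * R k * (B * B⁻¹) := by rw [hBinv, mul_one]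
      _ = B⁻¹ * (R k * B) * B⁻¹ := by simp [mul_assoc]
      _ = B⁻¹ * (B * R k) * B⁻¹ := by rw [hcomm]
      _ = (B⁻¹ * B) * (R k * B⁻¹) := by simp [mul_assoc]
      _ = R k * B⁻¹ := by rw [hBinv', one_mul]
  -- key: A * (R k * B⁻¹) = R k
  have hsum : (∑ ℓ ∈ S, R ℓ) * R k = R k * R k := by
    rw [Finset.sum_mul]
    rw [Finset.sum_eq_single k (fun ℓ hℓ hne => horth' ℓ hℓ hne) (fun h => absurd hk h)]
  have hkey : A * (R k * B⁻¹) = R k := by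
    calc A * (R k * B⁻¹) = ((∑ ℓ ∈ S, R ℓ) * R k + (c : ℂ) • R k) * B⁻¹ := by
          rw [hA]; simp [I1, add_mul, Matrix.smul_mul, mul_assoc]
      _ = (R k * R k + (c : ℂ) • R k) * B⁻¹ := by rw [hsum]
      _ = (R k * B) * B⁻¹ := by rw [hB]; rw [mul_add]; simp [I1, Matrix.mul_smul]
      _ = R k := by rw [mul_assoc, hBinv, mul_one]
  have h1 : A⁻¹ * R k = R k * B⁻¹ := by
    calc A⁻¹ * R k = A⁻¹ * (A * (R k * B⁻¹)) := by rw [hkey]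
      _ = (A⁻¹ * A) * (R k * B⁻¹) := by rw [mul_assoc]
      _ = R k * B⁻¹ := by rw [hAinv, one_mul]
  exact ⟨by rw [h1, hcommInv], hcommInv⟩
end

section
/- (Theorem 1) Let R_1, …, R_K be M×M complex Hermitian positive semidefinite matrices (channel covariance matrices), let ρ > 0 and τ > 0, and set c = 1/(ρτ). For a pilot assignment π : {1,…,K} → {1,…,τ′} (any finite pilot set), define for each k the matrix C_{π_k} = Σ_{ℓ : π_ℓ = π_k} R_ℓ + c·I, and define the sum channel-estimation MSE ε(π) = Σ_{k=1}^{K} trace(R_k − R_k·C_{π_k}⁻¹·R_k). Then for every pilot assignment π it holds that ε(π) ≥ Σ_{k=1}^{K} trace(R_k − R_k·(R_k + c·I)⁻¹·R_k); moreover, if trace(R_i·R_j) = 0 for all i ≠ j with π_i = π_j, then equality holds, i.e., ε(π) = Σ_{k=1}^{K} trace(R_k − R_k·(R_k + c·I)⁻¹·R_k). -/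
open scoped ComplexOrder

section Aux
open Matrix
variable {n : Type*} [Fintype n] [DecidableEq n]
set_option linter.unusedSectionVars false

lemma myTraceNonneg {A : Matrix n n ℂ} (hA : A.PosSemidef) : 0 ≤ A.trace := by
  rw [Matrix.trace]
  refine Finset.sum_nonneg fun i _ => ?_
  have h := hA.dotProduct_mulVec_nonneg (Pi.single i 1)
  simpa [dotProduct, Matrix.mulVec_single, Pi.single_apply, Finset.sum_ite_eq] using h

lemma myMulSelfZero (M : Matrix n n ℂ) (h : (M * Mᴴ).trace = 0) : M = 0 := by
  have hsum : ∑ i, ∑ j, M i j * star (M i j) = 0 := by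
    simpa [Matrix.trace, Matrix.mul_apply, Matrix.diag, Matrix.conjTranspose_apply] using h
  have hnn : ∀ i ∈ Finset.univ, (0:ℂ) ≤ ∑ j, M i j * star (M i j) :=
    fun i _ => Finset.sum_nonneg fun j _ => mul_star_self_nonneg _
  ext i j
  have h1 := (Finset.sum_eq_zero_iff_of_nonneg hnn).mp hsum i (Finset.mem_univ i)
  have h2 := (Finset.sum_eq_zero_iff_of_nonneg
    (fun j _ => mul_star_self_nonneg (M i j))).mp h1 j (Finset.mem_univ j)
  simpa using (CStarRing.mul_star_self_eq_zero_iff (M i j)).mp h2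

lemma myHelperTr {a b : Matrix n n ℂ} (ha : a.IsHermitian) (hb : b.IsHermitian) :
    ((a * a) * (b * b)).trace = ((a * b) * (a * b)ᴴ).trace := by
  rw [Matrix.conjTranspose_mul, ha.eq, hb.eq,
    show a * a * (b * b) = a * (a * b * b) by simp [mul_assoc],
    Matrix.trace_mul_comm]
  simp [mul_assoc]

open scoped MatrixOrder in
lemma myTraceRw {A B : Matrix n n ℂ} (hA : A.PosSemidef) (hB : B.PosSemidef) :
    (A * B).trace = ((CFC.sqrt A * CFC.sqrt B) * (CFC.sqrt A * CFC.sqrt B)ᴴ).trace := by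
  conv_lhs => rw [← CFC.sqrt_mul_sqrt_self A hA.nonneg, ← CFC.sqrt_mul_sqrt_self B hB.nonneg]
  exact myHelperTr (CFC.sqrt_nonneg A).posSemidef.isHermitian (CFC.sqrt_nonneg B).posSemidef.isHermitian

lemma myTraceMulNonneg {A B : Matrix n n ℂ} (hA : A.PosSemidef) (hB : B.PosSemidef) :
    0 ≤ (A * B).trace := by
  rw [myTraceRw hA hB]
  exact myTraceNonneg (Matrix.posSemidef_self_mul_conjTranspose _)

open scoped MatrixOrder in
lemma myMulEqZero {A B : Matrix n n ℂ} (hA : A.PosSemidef) (hB : B.PosSemidef)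
    (h : (A * B).trace = 0) : A * B = 0 := by
  rw [myTraceRw hA hB] at h
  have h0 : CFC.sqrt A * CFC.sqrt B = 0 := myMulSelfZero _ h
  have : A * B = CFC.sqrt A * (CFC.sqrt A * CFC.sqrt B) * CFC.sqrt B := by
    conv_lhs => rw [← CFC.sqrt_mul_sqrt_self A hA.nonneg, ← CFC.sqrt_mul_sqrt_self B hB.nonneg]
    noncomm_ring
  rw [this, h0, Matrix.mul_zero, Matrix.zero_mul]

lemma myStarQuad {H : Matrix n n ℂ} (hH : H.IsHermitian) (a b : n → ℂ) :
    star (star a ⬝ᵥ (H *ᵥ b)) = star b ⬝ᵥ (H *ᵥ a) := by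
  rw [star_dotProduct, star_star, star_mulVec, hH.eq, Matrix.dotProduct_mulVec]

lemma myInvSub {A B : Matrix n n ℂ} (hA : A.PosDef) (hB : B.PosDef)
    (hBA : (B - A).PosSemidef) : (A⁻¹ - B⁻¹).PosSemidef := by
  haveI := hA.isUnit.invertible
  haveI := hB.isUnit.invertible
  refine Matrix.PosSemidef.of_dotProduct_mulVec_nonneg (hA.isHermitian.inv.sub hB.isHermitian.inv) fun x => ?_
  set u := A⁻¹ *ᵥ x with hu
  set v := B⁻¹ *ᵥ x with hv
  have hAu : A *ᵥ u = x := by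
    rw [hu, Matrix.mulVec_mulVec, Matrix.mul_inv_of_invertible, Matrix.one_mulVec]
  have hBv : B *ᵥ v = x := by
    rw [hv, Matrix.mulVec_mulVec, Matrix.mul_inv_of_invertible, Matrix.one_mulVec]
  set p := star u ⬝ᵥ (A *ᵥ u) with hp
  set q := star v ⬝ᵥ (B *ᵥ v) with hq
  set r := star v ⬝ᵥ (A *ᵥ v) with hr
  have hqstar : star q = q := by rw [hq, myStarQuad hB.isHermitian]
  have hcross1 : star v ⬝ᵥ (A *ᵥ u) = q := by rw [hAu, ← hBv]
  have hcross2 : star u ⬝ᵥ (A *ᵥ v) = q := by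
    have := congrArg star hcross1
    rwa [myStarQuad hA.isHermitian, hqstar] at this
  have h1 : 0 ≤ p - q - q + r := by
    have h := hA.posSemidef.dotProduct_mulVec_nonneg (u - v)
    rwa [Matrix.mulVec_sub, star_sub, sub_dotProduct, dotProduct_sub,
      dotProduct_sub, hcross1, hcross2, ← hp, ← hr,
      show p - q - (q - r) = p - q - q + r by ring] at h
  have h2 : 0 ≤ q - r := by
    have h := hBA.dotProduct_mulVec_nonneg v
    rwa [Matrix.sub_mulVec, dotProduct_sub, ← hq, ← hr] at h
  have hgoal : (0:ℂ) ≤ p - q := by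
    have h3 := add_nonneg h1 h2
    rwa [show p - q - q + r + (q - r) = p - q by ring] at h3
  have e1 : star x ⬝ᵥ (A⁻¹ *ᵥ x) = p := by
    rw [hp]
    conv_lhs => rw [← hAu]
    rw [star_mulVec, hA.isHermitian.eq, Matrix.dotProduct_mulVec,
      Matrix.vecMul_vecMul, Matrix.mul_inv_of_invertible, Matrix.vecMul_one]
  have e2 : star x ⬝ᵥ (B⁻¹ *ᵥ x) = q := by
    rw [hq]
    conv_lhs => rw [← hBv]
    rw [star_mulVec, hB.isHermitian.eq, Matrix.dotProduct_mulVec,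
      Matrix.vecMul_vecMul, Matrix.mul_inv_of_invertible, Matrix.vecMul_one]
  rw [Matrix.sub_mulVec, dotProduct_sub, e1, e2]
  exact hgoal

end Aux

/-- **Theorem 1.** For channel covariance matrices `R 1, …, R K` (Hermitian PSD), training SNR
`ρ > 0`, pilot length `τ > 0`, `c = 1/(ρτ)`, and any pilot assignment `π`, the sum
channel-estimation MSE `ε(π) = ∑ k, trace (R k - R k * (C (π k))⁻¹ * R k)` with
`C (π k) = ∑_{ℓ : π ℓ = π k} R ℓ + c • I` satisfies
`ε(π) ≥ ∑ k, trace (R k - R k * (R k + c • I)⁻¹ * R k)`, with equality whenever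
`trace (R i * R j) = 0` for all `i ≠ j` reusing the same pilot. -/
theorem sum_mse_ce_ge_and_eq_of_orthogonal
    {M K τ' : ℕ} (R : Fin K → Matrix (Fin M) (Fin M) ℂ)
    (hR : ∀ k, (R k).PosSemidef)
    (ρ τ : ℝ) (hρ : 0 < ρ) (hτ : 0 < τ)
    (π : Fin K → Fin τ')
    (c : ℝ) (hc : c = 1 / (ρ * τ))
    (C : Fin K → Matrix (Fin M) (Fin M) ℂ)
    (hC : ∀ k, C k = ∑ ℓ ∈ Finset.univ.filter (fun ℓ => π ℓ = π k), R ℓ +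
      (c : ℂ) • (1 : Matrix (Fin M) (Fin M) ℂ)) :
    (∑ k, (R k - R k * (C k)⁻¹ * R k).trace ≥
      ∑ k, (R k - R k * (R k + (c : ℂ) • (1 : Matrix (Fin M) (Fin M) ℂ))⁻¹ * R k).trace) ∧
    ((∀ i j : Fin K, i ≠ j → π i = π j → (R i * R j).trace = 0) →
      ∑ k, (R k - R k * (C k)⁻¹ * R k).trace =
        ∑ k, (R k - R k * (R k + (c : ℂ) • (1 : Matrix (Fin M) (Fin M) ℂ))⁻¹ * R k).trace) := by
  have hcpos : 0 < c := by rw [hc]; positivity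
  have hI1pd : ((c:ℂ) • (1 : Matrix (Fin M) (Fin M) ℂ)).PosDef := by
    rw [Matrix.smul_one_eq_diagonal]
    exact Matrix.PosDef.diagonal (fun _ => by exact_mod_cast hcpos)
  have hDpd : ∀ k, (R k + (c:ℂ) • (1 : Matrix (Fin M) (Fin M) ℂ)).PosDef :=
    fun k => Matrix.PosDef.posSemidef_add (hR k) hI1pd
  have hSsum : ∀ s : Finset (Fin K), (∑ ℓ ∈ s, R ℓ).PosSemidef := fun s =>
    Finset.sum_induction _ _ (fun a b ha hb => ha.add hb) Matrix.PosSemidef.zero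
      (fun i _ => hR i)
  have hCpd : ∀ k, (C k).PosDef := fun k => by
    rw [hC k]; exact Matrix.PosDef.posSemidef_add (hSsum _) hI1pd
  have hCdecomp : ∀ k, C k = (R k + (c:ℂ) • 1) +
      ∑ ℓ ∈ (Finset.univ.filter (fun ℓ => π ℓ = π k)).erase k, R ℓ := by
    intro k
    have hk : k ∈ Finset.univ.filter (fun ℓ => π ℓ = π k) := by simp
    rw [hC k, ← Finset.add_sum_erase _ R hk]
    abel
  have hSpsd : ∀ k, (C k - (R k + (c:ℂ) • 1)).PosSemidef := fun k => by
    rw [hCdecomp k, add_sub_cancel_left]; exact hSsum _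
  have hinv : ∀ k, ((R k + (c:ℂ) • 1)⁻¹ - (C k)⁻¹).PosSemidef :=
    fun k => myInvSub (hDpd k) (hCpd k) (hSpsd k)
  have hRR : ∀ k, (R k * R k).PosSemidef := fun k => by
    have := Matrix.posSemidef_conjTranspose_mul_self (R k)
    rwa [(hR k).isHermitian.eq] at this
  have etr : ∀ X : Matrix (Fin M) (Fin M) ℂ, ∀ k,
      (X * (R k * R k)).trace = (R k * X * R k).trace := by
    intro X k
    rw [← mul_assoc, Matrix.trace_mul_cycle]
  have hterm : ∀ k, (R k - R k * (C k)⁻¹ * R k).trace -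
      (R k - R k * (R k + (c:ℂ) • 1)⁻¹ * R k).trace
      = (((R k + (c:ℂ) • 1)⁻¹ - (C k)⁻¹) * (R k * R k)).trace := by
    intro k
    rw [Matrix.sub_mul, Matrix.trace_sub, Matrix.trace_sub, Matrix.trace_sub,
      etr _ k, etr _ k]
    ring
  constructor
  · refine Finset.sum_le_sum fun k _ => ?_
    rw [← sub_nonneg, hterm k]
    exact myTraceMulNonneg (hinv k) (hRR k)
  · intro horth
    refine Finset.sum_congr rfl fun k _ => ?_
    haveI := (hDpd k).isUnit.invertible
    haveI := (hCpd k).isUnit.invertible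
    have hcomm : (R k + (c:ℂ) • 1)⁻¹ * R k = R k * (R k + (c:ℂ) • 1)⁻¹ := by
      have h0 : Commute (R k) (R k + (c:ℂ) • 1) := by
        unfold Commute SemiconjBy
        noncomm_ring
      rw [← Matrix.invOf_eq_nonsing_inv]
      exact (h0.invOf_right).symm.eq
    have hSR : (∑ ℓ ∈ (Finset.univ.filter (fun ℓ => π ℓ = π k)).erase k, R ℓ) * R k = 0 := by
      rw [Finset.sum_mul]
      refine Finset.sum_eq_zero fun ℓ hℓ => ?_
      obtain ⟨hne, hmem⟩ := Finset.mem_erase.mp hℓ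
      exact myMulEqZero (hR ℓ) (hR k) (horth ℓ k hne (Finset.mem_filter.mp hmem).2)
    have hCR : C k * ((R k + (c:ℂ) • 1)⁻¹ * R k) = R k := by
      rw [hCdecomp k, Matrix.add_mul, ← mul_assoc, Matrix.mul_inv_of_invertible, one_mul,
        hcomm, ← mul_assoc, hSR, Matrix.zero_mul, add_zero]
    have hkey : (C k)⁻¹ * R k = (R k + (c:ℂ) • 1)⁻¹ * R k := by
      calc (C k)⁻¹ * R k = (C k)⁻¹ * (C k * ((R k + (c:ℂ) • 1)⁻¹ * R k)) := by rw [hCR]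
        _ = (R k + (c:ℂ) • 1)⁻¹ * R k := by
            rw [← mul_assoc, Matrix.inv_mul_of_invertible, one_mul]
    rw [show R k * (C k)⁻¹ * R k = R k * (R k + (c:ℂ) • 1)⁻¹ * R k from by
      rw [mul_assoc, hkey, mul_assoc]]
end

section
/- Let R_1, …, R_K be M×M complex Hermitian positive semidefinite matrices, let c > 0, and let π : {1,…,K} → {1,…,τ′} be a pilot assignment; set C_{π_k} = Σ_{ℓ : π_ℓ = π_k} R_ℓ + c·I. Suppose that trace(R_i·R_j) = 0 for all i ≠ j with π_i = π_j. Then for all i ≠ j with π_i = π_j one has R_i·C_{π_i}⁻¹·R_j = 0; that is, the cross-covariance −R_i·C_{π_i}⁻¹·R_j of the channel estimation errors of any two users reusing the same pilot vanishes. -/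
open scoped ComplexOrder
open Matrix
set_option maxHeartbeats 1000000

lemma trace_conjTranspose_mul_self_eq_zero' {n m : ℕ} (A : Matrix (Fin n) (Fin m) ℂ)
    (h : (Aᴴ * A).trace = 0) : A = 0 := by
  have key : ∀ j i, A i j = 0 := by
    have h' : ∑ j, ∑ i, Complex.normSq (A i j) = 0 := by
      have : (Aᴴ * A).trace = ∑ j, ∑ i, (Complex.normSq (A i j) : ℂ) := by
        simp [Matrix.trace, Matrix.mul_apply, Matrix.conjTranspose_apply, Matrix.diag,
          Complex.normSq_eq_conj_mul_self]
      rw [this] at h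
      have := congrArg Complex.re h
      simpa using this
    intro j i
    have hj := (Finset.sum_eq_zero_iff_of_nonneg (fun j _ =>
      Finset.sum_nonneg fun i _ => Complex.normSq_nonneg _)).mp h' j (Finset.mem_univ j)
    have hi := (Finset.sum_eq_zero_iff_of_nonneg (fun i _ =>
      Complex.normSq_nonneg _)).mp hj i (Finset.mem_univ i)
    exact Complex.normSq_eq_zero.mp hi
  ext i j
  simpa using key j i

open scoped MatrixOrder in
lemma mul_eq_zero_of_trace_mul_eq_zero {n : ℕ} {A B : Matrix (Fin n) (Fin n) ℂ}
    (hA : A.PosSemidef) (hB : B.PosSemidef) (h : (A * B).trace = 0) : A * B = 0 := by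
  set a := CFC.sqrt A with ha
  set b := CFC.sqrt B with hb
  have haa : a * a = A := CFC.sqrt_mul_sqrt_self A (Matrix.PosSemidef.nonneg hA)
  have hbb : b * b = B := CFC.sqrt_mul_sqrt_self B (Matrix.PosSemidef.nonneg hB)
  have haH : aᴴ = a := (CFC.sqrt_nonneg A).posSemidef.isHermitian
  have hbH : bᴴ = b := (CFC.sqrt_nonneg B).posSemidef.isHermitian
  have key : b * a = 0 := by
    apply trace_conjTranspose_mul_self_eq_zero'
    have : (b * a)ᴴ * (b * a) = a * (b * b) * a := by
      rw [Matrix.conjTranspose_mul, haH, hbH]; simp only [Matrix.mul_assoc]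
    rw [this, hbb]
    calc (a * B * a).trace = (a * (B * a)).trace := by rw [Matrix.mul_assoc]
    _ = ((B * a) * a).trace := Matrix.trace_mul_comm _ _
    _ = (B * A).trace := by rw [Matrix.mul_assoc, haa]
    _ = (A * B).trace := Matrix.trace_mul_comm _ _
    _ = 0 := h
  calc A * B = a * (b * a)ᴴ * b := by
        rw [Matrix.conjTranspose_mul, haH, hbH, ← haa, ← hbb]; simp only [Matrix.mul_assoc]
  _ = 0 := by rw [key]; simp

/-- If `trace (R i * R j) = 0` for all `i ≠ j` reusing the same pilot, then the
cross-covariance `R i * (C (π i))⁻¹ * R j` of the channel estimation errors of any two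
users `i ≠ j` with `π i = π j` vanishes, where `C (π k) = ∑_{ℓ : π ℓ = π k} R ℓ + c • I`. -/
theorem cross_covariance_eq_zero_of_orthogonal
    {M K τ' : ℕ} (R : Fin K → Matrix (Fin M) (Fin M) ℂ)
    (hR : ∀ k, (R k).PosSemidef)
    (c : ℝ) (hc : 0 < c)
    (π : Fin K → Fin τ')
    (C : Fin K → Matrix (Fin M) (Fin M) ℂ)
    (hC : ∀ k, C k = ∑ ℓ ∈ Finset.univ.filter (fun ℓ => π ℓ = π k), R ℓ +
      (c : ℂ) • (1 : Matrix (Fin M) (Fin M) ℂ))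
    (horth : ∀ i j : Fin K, i ≠ j → π i = π j → (R i * R j).trace = 0) :
    ∀ i j : Fin K, i ≠ j → π i = π j → R i * (C i)⁻¹ * R j = 0 := by
  intro i j hij hpi
  -- c • 1 is positive definite
  have hcI : ((c : ℂ) • (1 : Matrix (Fin M) (Fin M) ℂ)).PosDef := by
    rw [Matrix.smul_one_eq_diagonal]
    rw [Matrix.posDef_diagonal_iff]
    intro _
    rw [Complex.zero_lt_real]
    exact hc
  -- C i is positive definite, hence invertible
  have hSpsd : (∑ ℓ ∈ Finset.univ.filter (fun ℓ => π ℓ = π i), R ℓ).PosSemidef := by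
    exact Finset.sum_induction R Matrix.PosSemidef (fun a b ha hb => ha.add hb)
      Matrix.PosSemidef.zero (fun ℓ _ => hR ℓ)
  have hCpd : (C i).PosDef := by
    rw [hC i]
    exact Matrix.PosDef.posSemidef_add hSpsd hcI
  have hCunit : IsUnit (C i) := hCpd.isUnit
  -- R i + c • 1 is positive definite
  have hBpd : (R i + (c : ℂ) • (1 : Matrix (Fin M) (Fin M) ℂ)).PosDef :=
    Matrix.PosDef.posSemidef_add (hR i) hcI
  have hBunit : IsUnit (R i + (c : ℂ) • (1 : Matrix (Fin M) (Fin M) ℂ)) := hBpd.isUnit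
  -- orthogonality products vanish
  have hmulzero : ∀ ℓ : Fin K, ℓ ≠ i → π ℓ = π i → R i * R ℓ = 0 := by
    intro ℓ hℓ hπ
    exact mul_eq_zero_of_trace_mul_eq_zero (hR i) (hR ℓ)
      (horth i ℓ (Ne.symm hℓ) hπ.symm)
  -- key identity: R i * C i = (R i + c•1) * R i
  have hkey : R i * C i = (R i + (c : ℂ) • (1 : Matrix (Fin M) (Fin M) ℂ)) * R i := by
    rw [hC i, Matrix.mul_add, Matrix.add_mul, Finset.mul_sum]
    congr 1
    · have hmem : i ∈ Finset.univ.filter (fun ℓ => π ℓ = π i) :=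
        Finset.mem_filter.mpr ⟨Finset.mem_univ i, rfl⟩
      rw [Finset.sum_eq_single_of_mem i hmem
        (fun ℓ hℓmem hℓne => hmulzero ℓ hℓne (Finset.mem_filter.mp hℓmem).2)]
    · simp [Matrix.mul_smul, Matrix.smul_mul]
  -- deduce R i * (C i)⁻¹ = (R i + c•1)⁻¹ * R i
  have h2 : R i * (C i)⁻¹ = (R i + (c : ℂ) • (1 : Matrix (Fin M) (Fin M) ℂ))⁻¹ * R i := by
    have := congrArg (fun X => (R i + (c : ℂ) • (1 : Matrix (Fin M) (Fin M) ℂ))⁻¹ * X * (C i)⁻¹)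
      hkey
    simp only [Matrix.mul_assoc] at this
    rw [Matrix.mul_nonsing_inv _ ((Matrix.isUnit_iff_isUnit_det _).mp hCunit), Matrix.mul_one,
      ← Matrix.mul_assoc, Matrix.nonsing_inv_mul _ ((Matrix.isUnit_iff_isUnit_det _).mp hBunit),
      one_mul] at this
    exact this.symm
  rw [h2, Matrix.mul_assoc, mul_eq_zero_of_trace_mul_eq_zero (hR i) (hR j) (horth i j hij hpi)]
  simp
end

section
/- Let (Ω, ℱ, P) be a probability space. Let a : Ω → ℂ^K, n : Ω → ℂ^M, and G̃ : Ω → ℂ^{M×K} be square-integrable random elements which are mutually independent, with E[a] = 0, E[a·aᴴ] = I_K, E[n] = 0, E[n·nᴴ] = I_M, E[G̃] = 0, and E[g̃_k·g̃_kᴴ] = R_{g̃_k} for each column g̃_k of G̃. Let Ĝ ∈ ℂ^{M×K} be a fixed matrix and ρ > 0. Then for every W ∈ ℂ^{M×K}, E[‖Wᵀ·((Ĝ + G̃)·a + ρ^{-1/2}·n) − a‖²] = Re trace(Wᵀ·(Ĝ·Ĝᴴ + Σ_{k=1}^{K} R_{g̃_k} + (1/ρ)·I_M)·W* + I_K − Wᵀ·Ĝ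 − Ĝᴴ·W*). -/
open scoped ComplexOrder
open Matrix MeasureTheory ProbabilityTheory

/-- A three-member family of types, used to state mutual independence of three random
elements with different codomains. -/
def fam3 (α β γ : Type) : Fin 3 → Type := ![α, β, γ]

instance fam3.instMeasurableSpace {α β γ : Type} [MeasurableSpace α] [MeasurableSpace β]
    [MeasurableSpace γ] : ∀ i, MeasurableSpace (fam3 α β γ i) :=
  Fin.cons ‹MeasurableSpace α› (Fin.cons ‹MeasurableSpace β›
    (Fin.cons ‹MeasurableSpace γ› finZeroElim))

/-- Bundle three random elements into a dependent family indexed by `Fin 3`. -/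
def fam3.mk {Ω α β γ : Type} (a : Ω → α) (b : Ω → β) (c : Ω → γ) :
    ∀ i, Ω → fam3 α β γ i :=
  Fin.cons a (Fin.cons b (Fin.cons c finZeroElim))

/-- Entrywise complex conjugate of a matrix. -/
def mconj {m n : Type*} (A : Matrix m n ℂ) : Matrix m n ℂ := A.map (starRingEnd ℂ)

/- ### Auxiliary material -/

section Aux

variable {Ω : Type} [MeasurableSpace Ω] {P : Measure Ω}

/-- Mutual independence is stable under a.e. modification. -/
lemma iIndepFun_congr_ae {ι : Type*} {β : ι → Type*} [m : ∀ i, MeasurableSpace (β i)]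
    {f g : ∀ i, Ω → β i} (h : iIndepFun f P) (hfg : ∀ i, f i =ᵐ[P] g i) :
    iIndepFun g P := by
  rw [iIndepFun_iff_measure_inter_preimage_eq_mul] at h ⊢
  intro S sets hsets
  have hset : ∀ i, (f i ⁻¹' sets i : Set Ω) =ᵐ[P] (g i ⁻¹' sets i) := by
    intro i
    rw [Filter.eventuallyEq_set]
    filter_upwards [hfg i] with ω hω
    simp [Set.mem_preimage, hω]
  have hInter : ((⋂ i ∈ S, f i ⁻¹' sets i) : Set Ω) =ᵐ[P] (⋂ i ∈ S, g i ⁻¹' sets i) := by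
    rw [Filter.eventuallyEq_set]
    have : ∀ᵐ ω ∂P, ∀ i ∈ S, (ω ∈ f i ⁻¹' sets i ↔ ω ∈ g i ⁻¹' sets i) := by
      rw [Filter.eventually_all_finset]
      exact fun i _ => Filter.eventuallyEq_set.mp (hset i)
    filter_upwards [this] with ω hω
    simp only [Set.mem_iInter]
    exact ⟨fun H i hi => (hω i hi).mp (H i hi), fun H i hi => (hω i hi).mpr (H i hi)⟩
  rw [← measure_congr hInter, h S hsets]
  exact Finset.prod_congr rfl fun i _ => measure_congr (hset i)

/-- Expectation of a product of independent complex random variables. -/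
lemma indep_integral_mul [IsProbabilityMeasure P] {X Y : Ω → ℂ} (h : IndepFun X Y P)
    (hX : AEMeasurable X P) (hY : AEMeasurable Y P) :
    ∫ ω, X ω * Y ω ∂P = (∫ ω, X ω ∂P) * ∫ ω, Y ω ∂P := by
  have hmap : P.map (fun ω => (X ω, Y ω)) = (P.map X).prod (P.map Y) :=
    (indepFun_iff_map_prod_eq_prod_map_map hX hY).mp h
  have h1 : ∫ ω, X ω * Y ω ∂P = ∫ p : ℂ × ℂ, p.1 * p.2 ∂(P.map (fun ω => (X ω, Y ω))) :=
    (integral_map (hX.prodMk hY) ((measurable_fst.mul measurable_snd).aestronglyMeasurable)).symm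
  rw [h1, hmap, integral_prod_mul (f := fun x : ℂ => x) (g := fun y : ℂ => y),
    integral_map (f := fun x : ℂ => x) hX measurable_id.aestronglyMeasurable,
    integral_map (f := fun x : ℂ => x) hY measurable_id.aestronglyMeasurable]

/-- The product of two `L²` complex random variables is integrable. -/
lemma integrable_l2_mul [IsProbabilityMeasure P] {f g : Ω → ℂ} (hf : MemLp f 2 P)
    (hg : MemLp g 2 P) : Integrable (fun ω => f ω * g ω) P := by
  have h : MemLp (f • g) 1 P :=
    MemLp.smul (p := 2) (q := 2) (r := 1) hg hf (hpqr := ⟨by rw [inv_one, ENNReal.inv_two_add_inv_two]⟩)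
  have := memLp_one_iff_integrable.mp h
  exact this.congr (Filter.Eventually.of_forall fun ω => by simp [smul_eq_mul])

/-- Conjugation preserves `L²`. -/
lemma memLp_conj {f : Ω → ℂ} (hf : MemLp f 2 P) :
    MemLp (fun ω => (starRingEnd ℂ) (f ω)) 2 P :=
  MemLp.of_le hf (continuous_star.comp_aestronglyMeasurable hf.1)
    (Filter.Eventually.of_forall fun ω => by simp)

/-- Complex conjugation is measurable. -/
lemma measurable_cconj : Measurable (starRingEnd ℂ) := Complex.continuous_conj.measurable

end Aux

/-- The index type enumerating the elementary random variables appearing in the receiver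
output: signal part, channel-error part (flattened), noise part. -/
abbrev idxT (M K : ℕ) := (Fin K) ⊕ ((Fin M × Fin K) ⊕ (Fin M))

/-- The elementary random variables (as functions of the realized values). -/
def Fv {M K : ℕ} (av : Fin K → ℂ) (nv : Fin M → ℂ) (Gv : Fin M → Fin K → ℂ) :
    idxT M K → ℂ
  | .inl j => av j
  | .inr (.inl q) => Gv q.1 q.2 * av q.2
  | .inr (.inr p) => nv p

/-- The deterministic coefficients. -/
noncomputable def coefv {M K : ℕ} (W Ghat : Matrix (Fin M) (Fin K) ℂ) (c : ℝ) (k : Fin K) :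
    idxT M K → ℂ
  | .inl j => ((Wᵀ * Ghat - 1) : Matrix (Fin K) (Fin K) ℂ) k j
  | .inr (.inl q) => W q.1 k
  | .inr (.inr p) => (c : ℂ) * W p k

/-- The second moments of the elementary random variables. -/
def Ev {M K : ℕ} (R : Fin K → Matrix (Fin M) (Fin M) ℂ) : idxT M K → idxT M K → ℂ
  | .inl j, .inl j' => if j = j' then 1 else 0
  | .inr (.inl q), .inr (.inl q') => if q.2 = q'.2 then R q.2 q.1 q'.1 else 0
  | .inr (.inr p), .inr (.inr p') => if p = p' then 1 else 0
  | _, _ => 0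

/-- Pointwise decomposition of the receiver output error. -/
lemma step1 {M K : ℕ} (W Ghat : Matrix (Fin M) (Fin K) ℂ) (c : ℝ)
    (av : Fin K → ℂ) (nv : Fin M → ℂ) (Gv : Fin M → Fin K → ℂ) (k : Fin K) :
    (Wᵀ *ᵥ (((Ghat + Matrix.of Gv) *ᵥ av) + c • nv) - av) k
      = ∑ i, coefv W Ghat c k i * Fv av nv Gv i := by
  classical
  simp only [Pi.sub_apply, Matrix.mulVec, dotProduct, Pi.add_apply, Pi.smul_apply,
    Matrix.add_apply, Matrix.of_apply, Matrix.transpose_apply, Complex.real_smul,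
    Fintype.sum_sum_type, Fintype.sum_prod_type, coefv, Fv, Matrix.sub_apply, Matrix.mul_apply,
    Matrix.one_apply, add_mul, mul_add, sub_mul, Finset.sum_add_distrib, Finset.sum_sub_distrib,
    ite_mul, one_mul, zero_mul, Finset.sum_ite_eq, Finset.mem_univ, if_true, Finset.mul_sum]
  have h1 : ∑ x : Fin K, (∑ x1 : Fin M, W x1 k * Ghat x1 x) * av x
      = ∑ x1 : Fin M, ∑ x : Fin K, W x1 k * (Ghat x1 x * av x) := by
    calc ∑ x : Fin K, (∑ x1 : Fin M, W x1 k * Ghat x1 x) * av x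
        = ∑ x : Fin K, ∑ x1 : Fin M, W x1 k * (Ghat x1 x * av x) :=
          Finset.sum_congr rfl fun x _ => by
            rw [Finset.sum_mul]; exact Finset.sum_congr rfl fun x1 _ => by ring
      _ = ∑ x1 : Fin M, ∑ x : Fin K, W x1 k * (Ghat x1 x * av x) := Finset.sum_comm
  have h2 : ∑ x : Fin M, (c : ℂ) * W x k * nv x = ∑ x : Fin M, W x k * ((c : ℂ) * nv x) :=
    Finset.sum_congr rfl fun x _ => by ring
  rw [h1, h2]
  ring

section Main

variable {Ω : Type} [MeasurableSpace Ω] {P : Measure Ω} [IsProbabilityMeasure P] {M K : ℕ}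
variable {a : Ω → Fin K → ℂ} {n : Ω → Fin M → ℂ} {Gt : Ω → Fin M → Fin K → ℂ}

/-- Integrability of the elementary second-moment integrands. -/
lemma step2_int
    (hma : Measurable a) (hmn : Measurable n) (hmG : Measurable Gt)
    (ha2 : MemLp a 2 P) (hn2 : MemLp n 2 P) (hGt2 : MemLp Gt 2 P)
    (hindep : iIndepFun (fam3.mk a n Gt) P)
    (i i' : idxT M K) :
    Integrable (fun ω => Fv (a ω) (n ω) (Gt ω) i
      * (starRingEnd ℂ) (Fv (a ω) (n ω) (Gt ω) i')) P := by
  classical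
  have hmaj : ∀ j, Measurable fun ω => a ω j := fun j => (measurable_pi_apply j).comp hma
  have hmnp : ∀ p, Measurable fun ω => n ω p := fun p => (measurable_pi_apply p).comp hmn
  have hmGq : ∀ p j, Measurable fun ω => Gt ω p j :=
    fun p j => (measurable_pi_apply j).comp ((measurable_pi_apply p).comp hmG)
  have haL2 : ∀ j, MemLp (fun ω => a ω j) 2 P := fun j =>
    ha2.of_le (hmaj j).aestronglyMeasurable
      (Filter.Eventually.of_forall fun ω => norm_le_pi_norm (a ω) j)
  have hnL2 : ∀ p, MemLp (fun ω => n ω p) 2 P := fun p =>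
    hn2.of_le (hmnp p).aestronglyMeasurable
      (Filter.Eventually.of_forall fun ω => norm_le_pi_norm (n ω) p)
  have hGL2 : ∀ p j, MemLp (fun ω => Gt ω p j) 2 P := fun p j =>
    hGt2.of_le (hmGq p j).aestronglyMeasurable
      (Filter.Eventually.of_forall fun ω =>
        (norm_le_pi_norm (Gt ω p) j).trans (norm_le_pi_norm (Gt ω) p))
  have hIag : IndepFun a Gt P := hindep.indepFun (show (0 : Fin 3) ≠ 2 by decide)
  have hmeas3 : ∀ i, Measurable (fam3.mk a n Gt i) := by
    intro i; fin_cases i; exacts [hma, hmn, hmG]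
  have hPair3 : IndepFun (fun ω => (a ω, n ω)) Gt P :=
    hindep.indepFun_prodMk hmeas3 0 1 2 (by decide) (by decide)
  rcases i with j | q | p <;> rcases i' with j' | q' | p' <;> simp only [Fv]
  · exact integrable_l2_mul (haL2 j) (memLp_conj (haL2 j'))
  · have hI : IndepFun (fun ω => a ω j * (starRingEnd ℂ) (a ω q'.2))
        (fun ω => (starRingEnd ℂ) (Gt ω q'.1 q'.2)) P :=
      IndepFun.comp (φ := fun v : Fin K → ℂ => v j * (starRingEnd ℂ) (v q'.2))
        (ψ := fun g : Fin M → Fin K → ℂ => (starRingEnd ℂ) (g q'.1 q'.2)) hIag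
        ((measurable_pi_apply j).mul (measurable_cconj.comp (measurable_pi_apply q'.2)))
        (measurable_cconj.comp ((measurable_pi_apply q'.2).comp (measurable_pi_apply q'.1)))
    have h1 := hI.integrable_mul (integrable_l2_mul (haL2 j) (memLp_conj (haL2 q'.2)))
      ((memLp_conj (hGL2 q'.1 q'.2)).integrable one_le_two)
    exact h1.congr (Filter.Eventually.of_forall fun ω => by
      simp only [Pi.mul_apply, _root_.map_mul]; ring)
  · exact integrable_l2_mul (haL2 j) (memLp_conj (hnL2 p'))
  · have hI : IndepFun (fun ω => Gt ω q.1 q.2)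
        (fun ω => a ω q.2 * (starRingEnd ℂ) (a ω j')) P :=
      IndepFun.comp (φ := fun g : Fin M → Fin K → ℂ => g q.1 q.2)
        (ψ := fun v : Fin K → ℂ => v q.2 * (starRingEnd ℂ) (v j')) hIag.symm
        ((measurable_pi_apply q.2).comp (measurable_pi_apply q.1))
        ((measurable_pi_apply q.2).mul (measurable_cconj.comp (measurable_pi_apply j')))
    have h1 := hI.integrable_mul ((hGL2 q.1 q.2).integrable one_le_two)
      (integrable_l2_mul (haL2 q.2) (memLp_conj (haL2 j')))
    exact h1.congr (Filter.Eventually.of_forall fun ω => by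
      simp only [Pi.mul_apply, _root_.map_mul]; ring)
  · have hI : IndepFun (fun ω => Gt ω q.1 q.2 * (starRingEnd ℂ) (Gt ω q'.1 q'.2))
        (fun ω => a ω q.2 * (starRingEnd ℂ) (a ω q'.2)) P :=
      IndepFun.comp
        (φ := fun g : Fin M → Fin K → ℂ => g q.1 q.2 * (starRingEnd ℂ) (g q'.1 q'.2))
        (ψ := fun v : Fin K → ℂ => v q.2 * (starRingEnd ℂ) (v q'.2)) hIag.symm
        (((measurable_pi_apply q.2).comp (measurable_pi_apply q.1)).mul
          (f := fun g : Fin M → Fin K → ℂ => g q.1 q.2)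
          (g := fun g : Fin M → Fin K → ℂ => (starRingEnd ℂ) (g q'.1 q'.2))
          (measurable_cconj.comp ((measurable_pi_apply q'.2).comp (measurable_pi_apply q'.1))))
        ((measurable_pi_apply q.2).mul (measurable_cconj.comp (measurable_pi_apply q'.2)))
    have h1 := hI.integrable_mul
      (integrable_l2_mul (hGL2 q.1 q.2) (memLp_conj (hGL2 q'.1 q'.2)))
      (integrable_l2_mul (haL2 q.2) (memLp_conj (haL2 q'.2)))
    exact h1.congr (Filter.Eventually.of_forall fun ω => by
      simp only [Pi.mul_apply, _root_.map_mul]; ring)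
  · have hI : IndepFun (fun ω => a ω q.2 * (starRingEnd ℂ) (n ω p'))
        (fun ω => Gt ω q.1 q.2) P :=
      IndepFun.comp
        (φ := fun x : (Fin K → ℂ) × (Fin M → ℂ) => x.1 q.2 * (starRingEnd ℂ) (x.2 p'))
        (ψ := fun g : Fin M → Fin K → ℂ => g q.1 q.2) hPair3
        (((measurable_pi_apply q.2).comp measurable_fst).mul
          (measurable_cconj.comp ((measurable_pi_apply p').comp measurable_snd)))
        ((measurable_pi_apply q.2).comp (measurable_pi_apply q.1))
    have h1 := hI.integrable_mul (integrable_l2_mul (haL2 q.2) (memLp_conj (hnL2 p')))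
      ((hGL2 q.1 q.2).integrable one_le_two)
    exact h1.congr (Filter.Eventually.of_forall fun ω => by
      simp only [Pi.mul_apply, _root_.map_mul]; ring)
  · exact integrable_l2_mul (hnL2 p) (memLp_conj (haL2 j'))
  · have hI : IndepFun (fun ω => n ω p * (starRingEnd ℂ) (a ω q'.2))
        (fun ω => (starRingEnd ℂ) (Gt ω q'.1 q'.2)) P :=
      IndepFun.comp
        (φ := fun x : (Fin K → ℂ) × (Fin M → ℂ) => x.2 p * (starRingEnd ℂ) (x.1 q'.2))
        (ψ := fun g : Fin M → Fin K → ℂ => (starRingEnd ℂ) (g q'.1 q'.2)) hPair3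
        (((measurable_pi_apply p).comp measurable_snd).mul
          (measurable_cconj.comp ((measurable_pi_apply q'.2).comp measurable_fst)))
        (measurable_cconj.comp ((measurable_pi_apply q'.2).comp (measurable_pi_apply q'.1)))
    have h1 := hI.integrable_mul (integrable_l2_mul (hnL2 p) (memLp_conj (haL2 q'.2)))
      ((memLp_conj (hGL2 q'.1 q'.2)).integrable one_le_two)
    exact h1.congr (Filter.Eventually.of_forall fun ω => by
      simp only [Pi.mul_apply, _root_.map_mul]; ring)
  · exact integrable_l2_mul (hnL2 p) (memLp_conj (hnL2 p'))

/-- Values of the elementary second moments. -/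
lemma step2_val
    (hma : Measurable a) (hmn : Measurable n) (hmG : Measurable Gt)
    (ha2 : MemLp a 2 P) (hn2 : MemLp n 2 P) (hGt2 : MemLp Gt 2 P)
    (hindep : iIndepFun (fam3.mk a n Gt) P)
    (haMean : ∀ k, ∫ ω, a ω k ∂P = 0)
    (haCov : ∀ k k', ∫ ω, a ω k * (starRingEnd ℂ) (a ω k') ∂P = if k = k' then 1 else 0)
    (hnMean : ∀ i, ∫ ω, n ω i ∂P = 0)
    (hnCov : ∀ i i', ∫ ω, n ω i * (starRingEnd ℂ) (n ω i') ∂P = if i = i' then 1 else 0)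
    (hGtMean : ∀ i k, ∫ ω, Gt ω i k ∂P = 0)
    {R : Fin K → Matrix (Fin M) (Fin M) ℂ}
    (hGtCov : ∀ k i j, ∫ ω, Gt ω i k * (starRingEnd ℂ) (Gt ω j k) ∂P = R k i j)
    (i i' : idxT M K) :
    ∫ ω, Fv (a ω) (n ω) (Gt ω) i * (starRingEnd ℂ) (Fv (a ω) (n ω) (Gt ω) i') ∂P
      = Ev R i i' := by
  classical
  have hmaj : ∀ j, Measurable fun ω => a ω j := fun j => (measurable_pi_apply j).comp hma
  have hmnp : ∀ p, Measurable fun ω => n ω p := fun p => (measurable_pi_apply p).comp hmn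
  have hmGq : ∀ p j, Measurable fun ω => Gt ω p j :=
    fun p j => (measurable_pi_apply j).comp ((measurable_pi_apply p).comp hmG)
  have hIag : IndepFun a Gt P := hindep.indepFun (show (0 : Fin 3) ≠ 2 by decide)
  have hIan : IndepFun a n P := hindep.indepFun (show (0 : Fin 3) ≠ 1 by decide)
  have hmeas3 : ∀ i, Measurable (fam3.mk a n Gt i) := by
    intro i; fin_cases i; exacts [hma, hmn, hmG]
  have hPair3 : IndepFun (fun ω => (a ω, n ω)) Gt P :=
    hindep.indepFun_prodMk hmeas3 0 1 2 (by decide) (by decide)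
  rcases i with j | q | p <;> rcases i' with j' | q' | p' <;> simp only [Fv, Ev]
  · exact haCov j j'
  · -- a vs Gt·a : zero
    have h0 : ∫ ω, a ω j * (starRingEnd ℂ) (Gt ω q'.1 q'.2 * a ω q'.2) ∂P
        = ∫ ω, (a ω j * (starRingEnd ℂ) (a ω q'.2))
            * (starRingEnd ℂ) (Gt ω q'.1 q'.2) ∂P :=
      integral_congr_ae (Filter.Eventually.of_forall fun ω => by
        simp only [_root_.map_mul]; ring)
    have hI : IndepFun (fun ω => a ω j * (starRingEnd ℂ) (a ω q'.2))
        (fun ω => (starRingEnd ℂ) (Gt ω q'.1 q'.2)) P :=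
      IndepFun.comp (φ := fun v : Fin K → ℂ => v j * (starRingEnd ℂ) (v q'.2))
        (ψ := fun g : Fin M → Fin K → ℂ => (starRingEnd ℂ) (g q'.1 q'.2)) hIag
        ((measurable_pi_apply j).mul (measurable_cconj.comp (measurable_pi_apply q'.2)))
        (measurable_cconj.comp ((measurable_pi_apply q'.2).comp (measurable_pi_apply q'.1)))
    rw [h0, indep_integral_mul hI ((hmaj j).mul (measurable_cconj.comp (hmaj q'.2))).aemeasurable
      (measurable_cconj.comp (hmGq q'.1 q'.2)).aemeasurable, integral_conj,
      hGtMean q'.1 q'.2, map_zero, mul_zero]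
  · -- a vs n : zero
    have hI : IndepFun (fun ω => a ω j) (fun ω => (starRingEnd ℂ) (n ω p')) P :=
      IndepFun.comp (φ := fun v : Fin K → ℂ => v j)
        (ψ := fun v : Fin M → ℂ => (starRingEnd ℂ) (v p')) hIan
        (measurable_pi_apply j) (measurable_cconj.comp (measurable_pi_apply p'))
    rw [indep_integral_mul hI (hmaj j).aemeasurable
      (measurable_cconj.comp (hmnp p')).aemeasurable, haMean j, zero_mul]
  · -- Gt·a vs a : zero
    have h0 : ∫ ω, Gt ω q.1 q.2 * a ω q.2 * (starRingEnd ℂ) (a ω j') ∂P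
        = ∫ ω, Gt ω q.1 q.2 * (a ω q.2 * (starRingEnd ℂ) (a ω j')) ∂P :=
      integral_congr_ae (Filter.Eventually.of_forall fun ω => by dsimp only; ring)
    have hI : IndepFun (fun ω => Gt ω q.1 q.2)
        (fun ω => a ω q.2 * (starRingEnd ℂ) (a ω j')) P :=
      IndepFun.comp (φ := fun g : Fin M → Fin K → ℂ => g q.1 q.2)
        (ψ := fun v : Fin K → ℂ => v q.2 * (starRingEnd ℂ) (v j')) hIag.symm
        ((measurable_pi_apply q.2).comp (measurable_pi_apply q.1))
        ((measurable_pi_apply q.2).mul (measurable_cconj.comp (measurable_pi_apply j')))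
    rw [h0, indep_integral_mul hI (hmGq q.1 q.2).aemeasurable
      ((hmaj q.2).mul (measurable_cconj.comp (hmaj j'))).aemeasurable,
      hGtMean q.1 q.2, zero_mul]
  · -- Gt·a vs Gt·a
    obtain ⟨p1, j1⟩ := q
    obtain ⟨p2, j2⟩ := q'
    have h0 : ∫ ω, Gt ω (p1, j1).1 (p1, j1).2 * a ω (p1, j1).2
          * (starRingEnd ℂ) (Gt ω (p2, j2).1 (p2, j2).2 * a ω (p2, j2).2) ∂P
        = ∫ ω, (Gt ω p1 j1 * (starRingEnd ℂ) (Gt ω p2 j2))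
            * (a ω j1 * (starRingEnd ℂ) (a ω j2)) ∂P :=
      integral_congr_ae (Filter.Eventually.of_forall fun ω => by
        simp only [_root_.map_mul]; ring)
    have hI : IndepFun (fun ω => Gt ω p1 j1 * (starRingEnd ℂ) (Gt ω p2 j2))
        (fun ω => a ω j1 * (starRingEnd ℂ) (a ω j2)) P :=
      IndepFun.comp
        (φ := fun g : Fin M → Fin K → ℂ => g p1 j1 * (starRingEnd ℂ) (g p2 j2))
        (ψ := fun v : Fin K → ℂ => v j1 * (starRingEnd ℂ) (v j2)) hIag.symm
        (((measurable_pi_apply j1).comp (measurable_pi_apply p1)).mul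
          (f := fun g : Fin M → Fin K → ℂ => g p1 j1)
          (g := fun g : Fin M → Fin K → ℂ => (starRingEnd ℂ) (g p2 j2))
          (measurable_cconj.comp ((measurable_pi_apply j2).comp (measurable_pi_apply p2))))
        ((measurable_pi_apply j1).mul (measurable_cconj.comp (measurable_pi_apply j2)))
    rw [h0, indep_integral_mul hI
      ((hmGq p1 j1).mul (measurable_cconj.comp (hmGq p2 j2))).aemeasurable
      ((hmaj j1).mul (measurable_cconj.comp (hmaj j2))).aemeasurable, haCov j1 j2]
    by_cases h : j1 = j2
    · subst h
      simp only [if_true, mul_one]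
      exact hGtCov j1 p1 p2
    · simp [h]
  · -- Gt·a vs n : zero
    obtain ⟨p1, j1⟩ := q
    have h0 : ∫ ω, Gt ω (p1, j1).1 (p1, j1).2 * a ω (p1, j1).2
          * (starRingEnd ℂ) (n ω p') ∂P
        = ∫ ω, (a ω j1 * (starRingEnd ℂ) (n ω p')) * Gt ω p1 j1 ∂P :=
      integral_congr_ae (Filter.Eventually.of_forall fun ω => by dsimp only; ring)
    have hI : IndepFun (fun ω => a ω j1 * (starRingEnd ℂ) (n ω p'))
        (fun ω => Gt ω p1 j1) P :=
      IndepFun.comp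
        (φ := fun x : (Fin K → ℂ) × (Fin M → ℂ) => x.1 j1 * (starRingEnd ℂ) (x.2 p'))
        (ψ := fun g : Fin M → Fin K → ℂ => g p1 j1) hPair3
        (((measurable_pi_apply j1).comp measurable_fst).mul
          (measurable_cconj.comp ((measurable_pi_apply p').comp measurable_snd)))
        ((measurable_pi_apply j1).comp (measurable_pi_apply p1))
    rw [h0, indep_integral_mul hI
      ((hmaj j1).mul (measurable_cconj.comp (hmnp p'))).aemeasurable
      (hmGq p1 j1).aemeasurable, hGtMean p1 j1, mul_zero]
  · -- n vs a : zero
    have hI : IndepFun (fun ω => n ω p) (fun ω => (starRingEnd ℂ) (a ω j')) P :=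
      IndepFun.comp (φ := fun v : Fin M → ℂ => v p)
        (ψ := fun v : Fin K → ℂ => (starRingEnd ℂ) (v j')) hIan.symm
        (measurable_pi_apply p) (measurable_cconj.comp (measurable_pi_apply j'))
    rw [indep_integral_mul hI (hmnp p).aemeasurable
      (measurable_cconj.comp (hmaj j')).aemeasurable, hnMean p, zero_mul]
  · -- n vs Gt·a : zero
    obtain ⟨p2, j2⟩ := q'
    have h0 : ∫ ω, n ω p
          * (starRingEnd ℂ) (Gt ω (p2, j2).1 (p2, j2).2 * a ω (p2, j2).2) ∂P
        = ∫ ω, (n ω p * (starRingEnd ℂ) (a ω j2))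
            * (starRingEnd ℂ) (Gt ω p2 j2) ∂P :=
      integral_congr_ae (Filter.Eventually.of_forall fun ω => by
        simp only [_root_.map_mul]; ring)
    have hI : IndepFun (fun ω => n ω p * (starRingEnd ℂ) (a ω j2))
        (fun ω => (starRingEnd ℂ) (Gt ω p2 j2)) P :=
      IndepFun.comp
        (φ := fun x : (Fin K → ℂ) × (Fin M → ℂ) => x.2 p * (starRingEnd ℂ) (x.1 j2))
        (ψ := fun g : Fin M → Fin K → ℂ => (starRingEnd ℂ) (g p2 j2)) hPair3
        (((measurable_pi_apply p).comp measurable_snd).mul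
          (measurable_cconj.comp ((measurable_pi_apply j2).comp measurable_fst)))
        (measurable_cconj.comp ((measurable_pi_apply j2).comp (measurable_pi_apply p2)))
    rw [h0, indep_integral_mul hI
      ((hmnp p).mul (measurable_cconj.comp (hmaj j2))).aemeasurable
      (measurable_cconj.comp (hmGq p2 j2)).aemeasurable, integral_conj, hGtMean p2 j2,
      map_zero, mul_zero]
  · exact hnCov p p'

end Main

/-- The purely algebraic step. -/
lemma step3 {M K : ℕ} (W Ghat : Matrix (Fin M) (Fin K) ℂ)
    (R : Fin K → Matrix (Fin M) (Fin M) ℂ) (c ρ : ℝ)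
    (hc : (c : ℂ) * (starRingEnd ℂ) (c : ℂ) = ((1 / ρ : ℝ) : ℂ)) (k : Fin K) :
    ∑ i, ∑ i', coefv W Ghat c k i * (starRingEnd ℂ) (coefv W Ghat c k i') * Ev R i i'
      = ((Wᵀ * (Ghat * Ghatᴴ + ∑ j, R j + ((1 / ρ : ℝ) : ℂ) • 1) * mconj W
          + 1 - Wᵀ * Ghat - Ghatᴴ * mconj W) : Matrix (Fin K) (Fin K) ℂ) k k := by
  classical
  simp only [Fintype.sum_sum_type, Fintype.sum_prod_type, coefv, Ev, mul_zero, zero_mul, mul_one,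
    Finset.sum_const_zero, add_zero, zero_add, mul_ite, Finset.sum_ite_eq, Finset.mem_univ,
    if_true]
  set C : Matrix (Fin K) (Fin K) ℂ := Wᵀ * Ghat with hCdef
  set s : ℂ := ((1 / ρ : ℝ) : ℂ) with hsdef
  have hC : ∀ x, ((Ghatᴴ * mconj W : Matrix (Fin K) (Fin K) ℂ)) x k
      = (starRingEnd ℂ) (C k x) := by
    intro x
    rw [hCdef]
    simp only [Matrix.mul_apply, mconj, Matrix.map_apply, Matrix.conjTranspose_apply,
      Matrix.transpose_apply, map_sum, _root_.map_mul, RCLike.star_def]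
    exact Finset.sum_congr rfl fun p _ => by ring
  have hB : ∑ x, ((C - 1 : Matrix (Fin K) (Fin K) ℂ)) k x
        * (starRingEnd ℂ) ((C - 1 : Matrix (Fin K) (Fin K) ℂ) k x)
      = ∑ x, C k x * (starRingEnd ℂ) (C k x) - C k k - (starRingEnd ℂ) (C k k) + 1 := by
    have : ∀ x, ((C - 1 : Matrix (Fin K) (Fin K) ℂ)) k x
        * (starRingEnd ℂ) ((C - 1 : Matrix (Fin K) (Fin K) ℂ) k x)
        = C k x * (starRingEnd ℂ) (C k x) - (if k = x then (starRingEnd ℂ) (C k x) else 0)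
          - (if k = x then C k x else 0) + (if k = x then 1 else 0) := by
      intro x
      by_cases h : k = x <;>
        simp [Matrix.sub_apply, Matrix.one_apply, h, map_sub, _root_.map_one] <;> ring
    rw [Finset.sum_congr rfl fun x _ => this x]
    simp only [Finset.sum_add_distrib, Finset.sum_sub_distrib, Finset.sum_ite_eq,
      Finset.mem_univ, if_true]
    ring
  have hdist : Wᵀ * (Ghat * Ghatᴴ + ∑ j, R j + s • 1) * mconj W
      = Wᵀ * Ghat * (Ghatᴴ * mconj W) + Wᵀ * (∑ j, R j) * mconj W
        + s • (Wᵀ * mconj W) := by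
    rw [Matrix.mul_add, Matrix.mul_add, Matrix.add_mul, Matrix.add_mul, Matrix.mul_smul,
      Matrix.smul_mul, Matrix.mul_one, ← Matrix.mul_assoc Wᵀ Ghat Ghatᴴ,
      Matrix.mul_assoc (Wᵀ * Ghat) Ghatᴴ (mconj W)]
  have h1 : ((Wᵀ * Ghat * (Ghatᴴ * mconj W) : Matrix (Fin K) (Fin K) ℂ)) k k
      = ∑ x, C k x * (starRingEnd ℂ) (C k x) := by
    rw [show Wᵀ * Ghat * (Ghatᴴ * mconj W) = C * (Ghatᴴ * mconj W) from by rw [hCdef]]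
    rw [Matrix.mul_apply]
    exact Finset.sum_congr rfl fun x _ => by rw [hC x]
  have h2 : ((Wᵀ * (∑ j, R j) * mconj W : Matrix (Fin K) (Fin K) ℂ)) k k
      = ∑ x : Fin M, ∑ j : Fin K, ∑ x2 : Fin M,
          W x k * (starRingEnd ℂ) (W x2 k) * R j x x2 := by
    calc ((Wᵀ * (∑ j, R j) * mconj W : Matrix (Fin K) (Fin K) ℂ)) k k
        = ∑ x2 : Fin M, (∑ x : Fin M, W x k * ∑ j, R j x x2)
            * (starRingEnd ℂ) (W x2 k) := by
          simp [Matrix.mul_apply, mconj, Matrix.map_apply, Matrix.transpose_apply,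
            Matrix.sum_apply]
      _ = ∑ x2 : Fin M, ∑ x : Fin M, ∑ j : Fin K,
            W x k * (starRingEnd ℂ) (W x2 k) * R j x x2 := by
          refine Finset.sum_congr rfl fun x2 _ => ?_
          rw [Finset.sum_mul]
          refine Finset.sum_congr rfl fun x _ => ?_
          rw [Finset.mul_sum, Finset.sum_mul]
          exact Finset.sum_congr rfl fun j _ => by ring
      _ = ∑ x : Fin M, ∑ x2 : Fin M, ∑ j : Fin K,
            W x k * (starRingEnd ℂ) (W x2 k) * R j x x2 := Finset.sum_comm
      _ = ∑ x : Fin M, ∑ j : Fin K, ∑ x2 : Fin M,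
            W x k * (starRingEnd ℂ) (W x2 k) * R j x x2 :=
          Finset.sum_congr rfl fun x _ => Finset.sum_comm
  have h3 : ((s • (Wᵀ * mconj W) : Matrix (Fin K) (Fin K) ℂ)) k k
      = ∑ x : Fin M, (c : ℂ) * W x k * (starRingEnd ℂ) ((c : ℂ) * W x k) := by
    rw [Matrix.smul_apply, Matrix.mul_apply, smul_eq_mul, Finset.mul_sum]
    refine Finset.sum_congr rfl fun x _ => ?_
    simp only [mconj, Matrix.map_apply, Matrix.transpose_apply, _root_.map_mul]
    linear_combination (-(W x k * (starRingEnd ℂ) (W x k))) * hc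
  have hMat : ((Wᵀ * (Ghat * Ghatᴴ + ∑ j, R j + s • 1) * mconj W
        + 1 - Wᵀ * Ghat - Ghatᴴ * mconj W : Matrix (Fin K) (Fin K) ℂ)) k k
      = ((Wᵀ * Ghat * (Ghatᴴ * mconj W) : Matrix (Fin K) (Fin K) ℂ)) k k
        + ((Wᵀ * (∑ j, R j) * mconj W : Matrix (Fin K) (Fin K) ℂ)) k k
        + ((s • (Wᵀ * mconj W) : Matrix (Fin K) (Fin K) ℂ)) k k
        + 1 - C k k - (starRingEnd ℂ) (C k k) := by
    rw [hdist]
    simp only [Matrix.add_apply, Matrix.sub_apply, Matrix.one_apply_eq, hC k]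
    rfl
  rw [hB, hMat, h1, h2, h3]
  ring

/-- The uplink mean square error of signal detection of a linear receiver `W`:
if `a`, `n`, `G̃` are mutually independent and square integrable with `E[a] = 0`,
`E[a aᴴ] = I_K`, `E[n] = 0`, `E[n nᴴ] = I_M`, `E[G̃] = 0`, `E[g̃ₖ g̃ₖᴴ] = R k`, then
`E‖Wᵀ((Ĝ+G̃)a + ρ^{-1/2} n) − a‖² =
  Re trace (Wᵀ (Ĝ Ĝᴴ + ∑ₖ R k + (1/ρ) I) W* + I − Wᵀ Ĝ − Ĝᴴ W*)`. -/
theorem ul_mse_sd_formula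
    {Ω : Type} [MeasurableSpace Ω] (P : Measure Ω) [IsProbabilityMeasure P]
    {M K : ℕ}
    (a : Ω → Fin K → ℂ) (n : Ω → Fin M → ℂ) (Gt : Ω → Fin M → Fin K → ℂ)
    (ha2 : MemLp a 2 P) (hn2 : MemLp n 2 P) (hGt2 : MemLp Gt 2 P)
    (hindep : iIndepFun (fam3.mk a n Gt) P)
    (haMean : ∀ k, ∫ ω, a ω k ∂P = 0)
    (haCov : ∀ k k', ∫ ω, a ω k * (starRingEnd ℂ) (a ω k') ∂P = if k = k' then 1 else 0)
    (hnMean : ∀ i, ∫ ω, n ω i ∂P = 0)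
    (hnCov : ∀ i i', ∫ ω, n ω i * (starRingEnd ℂ) (n ω i') ∂P = if i = i' then 1 else 0)
    (hGtMean : ∀ i k, ∫ ω, Gt ω i k ∂P = 0)
    (R : Fin K → Matrix (Fin M) (Fin M) ℂ)
    (hGtCov : ∀ k i j, ∫ ω, Gt ω i k * (starRingEnd ℂ) (Gt ω j k) ∂P = R k i j)
    (Ghat : Matrix (Fin M) (Fin K) ℂ) (ρ : ℝ) (hρ : 0 < ρ) :
    ∀ W : Matrix (Fin M) (Fin K) ℂ,
      ∫ ω, (∑ k, ‖(Wᵀ *ᵥ (((Ghat + Matrix.of (Gt ω)) *ᵥ a ω)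
          + (Real.sqrt ρ)⁻¹ • n ω) - a ω) k‖ ^ 2) ∂P =
      ((Wᵀ * (Ghat * Ghatᴴ + ∑ k, R k + ((1 / ρ : ℝ) : ℂ) • 1) * mconj W
          + 1 - Wᵀ * Ghat - Ghatᴴ * mconj W).trace).re := by
  intro W
  classical
  have hc : (((Real.sqrt ρ)⁻¹ : ℝ) : ℂ) * (starRingEnd ℂ) (((Real.sqrt ρ)⁻¹ : ℝ) : ℂ)
      = ((1 / ρ : ℝ) : ℂ) := by
    rw [Complex.conj_ofReal, ← Complex.ofReal_mul]
    congr 1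
    rw [← mul_inv, Real.mul_self_sqrt hρ.le, one_div]
  -- pass to measurable representatives
  set a' : Ω → Fin K → ℂ := ha2.1.mk a with ha'def
  set n' : Ω → Fin M → ℂ := hn2.1.mk n with hn'def
  set Gt' : Ω → Fin M → Fin K → ℂ := hGt2.1.mk Gt with hGt'def
  have hma : Measurable a' := ha2.1.stronglyMeasurable_mk.measurable
  have hmn : Measurable n' := hn2.1.stronglyMeasurable_mk.measurable
  have hmG : Measurable Gt' := hGt2.1.stronglyMeasurable_mk.measurable
  have hae : a =ᵐ[P] a' := ha2.1.ae_eq_mk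
  have hne : n =ᵐ[P] n' := hn2.1.ae_eq_mk
  have hGe : Gt =ᵐ[P] Gt' := hGt2.1.ae_eq_mk
  have ha2' : MemLp a' 2 P := ha2.ae_eq hae
  have hn2' : MemLp n' 2 P := hn2.ae_eq hne
  have hGt2' : MemLp Gt' 2 P := hGt2.ae_eq hGe
  have hindep' : iIndepFun (fam3.mk a' n' Gt') P :=
    iIndepFun_congr_ae hindep (by intro i; fin_cases i; exacts [hae, hne, hGe])
  have haMean' : ∀ k, ∫ ω, a' ω k ∂P = 0 := fun k => by
    rw [← integral_congr_ae (hae.mono fun ω h => congrFun h k)]; exact haMean k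
  have hnMean' : ∀ i, ∫ ω, n' ω i ∂P = 0 := fun i => by
    rw [← integral_congr_ae (hne.mono fun ω h => congrFun h i)]; exact hnMean i
  have hGtMean' : ∀ i k, ∫ ω, Gt' ω i k ∂P = 0 := fun i k => by
    rw [← integral_congr_ae (hGe.mono fun ω h => congrFun (congrFun h i) k)]
    exact hGtMean i k
  have haCov' : ∀ k k', ∫ ω, a' ω k * (starRingEnd ℂ) (a' ω k') ∂P
      = if k = k' then 1 else 0 := fun k k' => by
    rw [← integral_congr_ae (hae.mono fun ω h =>
      show a ω k * (starRingEnd ℂ) (a ω k') = a' ω k * (starRingEnd ℂ) (a' ω k') by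
        rw [congrFun h k, congrFun h k'])]
    exact haCov k k'
  have hnCov' : ∀ i i', ∫ ω, n' ω i * (starRingEnd ℂ) (n' ω i') ∂P
      = if i = i' then 1 else 0 := fun i i' => by
    rw [← integral_congr_ae (hne.mono fun ω h =>
      show n ω i * (starRingEnd ℂ) (n ω i') = n' ω i * (starRingEnd ℂ) (n' ω i') by
        rw [congrFun h i, congrFun h i'])]
    exact hnCov i i'
  have hGtCov' : ∀ k i j, ∫ ω, Gt' ω i k * (starRingEnd ℂ) (Gt' ω j k) ∂P = R k i j :=
    fun k i j => by
    rw [← integral_congr_ae (hGe.mono fun ω h =>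
      show Gt ω i k * (starRingEnd ℂ) (Gt ω j k)
          = Gt' ω i k * (starRingEnd ℂ) (Gt' ω j k) by
        rw [congrFun (congrFun h i) k, congrFun (congrFun h j) k])]
    exact hGtCov k i j
  have hgoalEq : ∫ ω, (∑ k, ‖(Wᵀ *ᵥ (((Ghat + Matrix.of (Gt ω)) *ᵥ a ω)
          + (Real.sqrt ρ)⁻¹ • n ω) - a ω) k‖ ^ 2) ∂P
      = ∫ ω, (∑ k, ‖(Wᵀ *ᵥ (((Ghat + Matrix.of (Gt' ω)) *ᵥ a' ω)
          + (Real.sqrt ρ)⁻¹ • n' ω) - a' ω) k‖ ^ 2) ∂P := by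
    refine integral_congr_ae ?_
    filter_upwards [hae, hne, hGe] with ω h1 h2 h3
    rw [h1, h2, h3]
  rw [hgoalEq]
  have hInt := step2_int hma hmn hmG ha2' hn2' hGt2' hindep'
  have hVal := step2_val hma hmn hmG ha2' hn2' hGt2' hindep' haMean' haCov' hnMean'
    hnCov' hGtMean' hGtCov'
  have hpt : ∀ ω, (∑ k, ‖(Wᵀ *ᵥ (((Ghat + Matrix.of (Gt' ω)) *ᵥ a' ω)
          + (Real.sqrt ρ)⁻¹ • n' ω) - a' ω) k‖ ^ 2)
      = (∑ k, ∑ i, ∑ i', (coefv W Ghat (Real.sqrt ρ)⁻¹ k i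
            * (starRingEnd ℂ) (coefv W Ghat (Real.sqrt ρ)⁻¹ k i'))
          * (Fv (a' ω) (n' ω) (Gt' ω) i
            * (starRingEnd ℂ) (Fv (a' ω) (n' ω) (Gt' ω) i'))).re := by
    intro ω
    calc ∑ k, ‖(Wᵀ *ᵥ (((Ghat + Matrix.of (Gt' ω)) *ᵥ a' ω)
            + (Real.sqrt ρ)⁻¹ • n' ω) - a' ω) k‖ ^ 2
        = ∑ k, ((Wᵀ *ᵥ (((Ghat + Matrix.of (Gt' ω)) *ᵥ a' ω)
            + (Real.sqrt ρ)⁻¹ • n' ω) - a' ω) k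
            * (starRingEnd ℂ) ((Wᵀ *ᵥ (((Ghat + Matrix.of (Gt' ω)) *ᵥ a' ω)
            + (Real.sqrt ρ)⁻¹ • n' ω) - a' ω) k)).re := by
          refine Finset.sum_congr rfl fun k _ => ?_
          rw [Complex.mul_conj, Complex.ofReal_re, Complex.normSq_eq_norm_sq]
      _ = (∑ k, ((Wᵀ *ᵥ (((Ghat + Matrix.of (Gt' ω)) *ᵥ a' ω)
            + (Real.sqrt ρ)⁻¹ • n' ω) - a' ω) k
            * (starRingEnd ℂ) ((Wᵀ *ᵥ (((Ghat + Matrix.of (Gt' ω)) *ᵥ a' ω)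
            + (Real.sqrt ρ)⁻¹ • n' ω) - a' ω) k))).re := (Complex.re_sum _ _).symm
      _ = (∑ k, ∑ i, ∑ i', (coefv W Ghat (Real.sqrt ρ)⁻¹ k i
            * (starRingEnd ℂ) (coefv W Ghat (Real.sqrt ρ)⁻¹ k i'))
          * (Fv (a' ω) (n' ω) (Gt' ω) i
            * (starRingEnd ℂ) (Fv (a' ω) (n' ω) (Gt' ω) i'))).re := by
          refine congrArg Complex.re (Finset.sum_congr rfl fun k _ => ?_)
          rw [step1 W Ghat (Real.sqrt ρ)⁻¹ (a' ω) (n' ω) (Gt' ω) k, map_sum,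
            Finset.sum_mul_sum]
          exact Finset.sum_congr rfl fun i _ => Finset.sum_congr rfl fun i' _ => by
            rw [_root_.map_mul]; ring
  rw [integral_congr_ae (Filter.Eventually.of_forall hpt)]
  have hGint : Integrable (fun ω => ∑ k : Fin K, ∑ i, ∑ i',
      (coefv W Ghat (Real.sqrt ρ)⁻¹ k i
        * (starRingEnd ℂ) (coefv W Ghat (Real.sqrt ρ)⁻¹ k i'))
      * (Fv (a' ω) (n' ω) (Gt' ω) i
        * (starRingEnd ℂ) (Fv (a' ω) (n' ω) (Gt' ω) i'))) P :=
    integrable_finset_sum _ fun k _ => integrable_finset_sum _ fun i _ =>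
      integrable_finset_sum _ fun i' _ => (hInt i i').const_mul _
  have hre' := integral_re (μ := P) hGint
  simp only [RCLike.re_to_complex] at hre'
  rw [hre']
  have hGval : ∫ ω, (∑ k : Fin K, ∑ i, ∑ i',
      (coefv W Ghat (Real.sqrt ρ)⁻¹ k i
        * (starRingEnd ℂ) (coefv W Ghat (Real.sqrt ρ)⁻¹ k i'))
      * (Fv (a' ω) (n' ω) (Gt' ω) i
        * (starRingEnd ℂ) (Fv (a' ω) (n' ω) (Gt' ω) i'))) ∂P
      = ∑ k : Fin K, ∑ i, ∑ i', (coefv W Ghat (Real.sqrt ρ)⁻¹ k i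
        * (starRingEnd ℂ) (coefv W Ghat (Real.sqrt ρ)⁻¹ k i')) * Ev R i i' := by
    rw [integral_finset_sum _ (fun k _ => integrable_finset_sum _ fun i _ =>
      integrable_finset_sum _ fun i' _ => (hInt i i').const_mul _)]
    refine Finset.sum_congr rfl fun k _ => ?_
    rw [integral_finset_sum _ (fun i _ => integrable_finset_sum _ fun i' _ =>
      (hInt i i').const_mul _)]
    refine Finset.sum_congr rfl fun i _ => ?_
    rw [integral_finset_sum _ (fun i' _ => (hInt i i').const_mul _)]
    refine Finset.sum_congr rfl fun i' _ => ?_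
    rw [integral_const_mul, hVal i i']
  rw [hGval]
  have htr : (Wᵀ * (Ghat * Ghatᴴ + ∑ k, R k + ((1 / ρ : ℝ) : ℂ) • 1) * mconj W
      + 1 - Wᵀ * Ghat - Ghatᴴ * mconj W).trace
      = ∑ k : Fin K, ((Wᵀ * (Ghat * Ghatᴴ + ∑ k, R k + ((1 / ρ : ℝ) : ℂ) • 1) * mconj W
      + 1 - Wᵀ * Ghat - Ghatᴴ * mconj W : Matrix (Fin K) (Fin K) ℂ)) k k := by
    simp [Matrix.trace, Matrix.diag]
  rw [htr]
  exact congrArg Complex.re (Finset.sum_congr rfl fun k _ =>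
    step3 W Ghat R (Real.sqrt ρ)⁻¹ ρ hc k)
end

section
/- (Theorem 3) Let Ĝ be a nonzero M×K complex matrix, let R̃ be an M×M complex Hermitian positive semidefinite matrix, let ρ > 0 and K ≥ 1; set D = R̃ + (1/ρ)·I_M and C = Ĝ·Ĝᴴ + D. Define, for B ∈ ℂ^{M×K} and α ∈ ℝ, ε(B, α) = Re trace(α²·Bᴴ·(Ĝ*·Ĝᵀ + R̃*)·B − α·Ĝᵀ·B − α·Bᴴ·Ĝ*) + (α²/ρ + 1)·K. Let γ = √(trace(Ĝᴴ·C⁻²·Ĝ)/K) (which is positive), B_opt = (1/γ)·(C⁻¹·Ĝ)*, and α_opt = γ. Then trace(B_opt·B_optᴴ) = K, and (B_opt, α_opt) is a global minimizer of ε over the feasible set {(B, α) : trace(B·Bᴴ) ≤ K, α ∈ ℝ}, with minimum value ε(B_opt, α_opt) = trace((I_K + Ĝᴴ·D⁻¹·Ĝ)⁻¹). -/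
open scoped ComplexOrder
open Matrix

section aux
variable {m n p : Type*}

lemma mconj_mconj (A : Matrix m n ℂ) : mconj (mconj A) = A := by
  ext i j; simp [mconj]

lemma mconj_add (A B : Matrix m n ℂ) : mconj (A + B) = mconj A + mconj B := by
  ext i j; simp [mconj]

lemma mconj_sub (A B : Matrix m n ℂ) : mconj (A - B) = mconj A - mconj B := by
  ext i j; simp [mconj]

lemma mconj_mul [Fintype n] (A : Matrix m n ℂ) (B : Matrix n p ℂ) :
    mconj (A * B) = mconj A * mconj B := by
  ext i j; simp [mconj, Matrix.mul_apply, map_sum]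

lemma mconj_rsmul (r : ℝ) (A : Matrix m n ℂ) : mconj (r • A) = r • mconj A := by
  ext i j; simp [mconj, Matrix.smul_apply, Complex.real_smul]

lemma mconj_conjTranspose (A : Matrix m n ℂ) : mconj (Aᴴ) = Aᵀ := by
  ext i j; simp [mconj]

lemma mconj_transpose (A : Matrix m n ℂ) : mconj (Aᵀ) = Aᴴ := by
  ext i j; simp [mconj]

lemma ofReal_smul_mat (r : ℝ) (A : Matrix m n ℂ) : ((r:ℂ)) • A = r • A := by
  ext i j; simp [Complex.real_smul]

lemma conjTranspose_mconj (A : Matrix m n ℂ) : (mconj A)ᴴ = Aᵀ := by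
  ext i j; simp [mconj]

lemma trace_mconj [Fintype n] (A : Matrix n n ℂ) : (mconj A).trace = star A.trace := by
  simp [Matrix.trace, mconj, Matrix.diag]

lemma re_trace_mconj [Fintype n] (A : Matrix n n ℂ) : ((mconj A).trace).re = (A.trace).re := by
  rw [trace_mconj]; exact Complex.conj_re _

lemma re_trace_quad_nonneg {M K : ℕ} {C : Matrix (Fin M) (Fin M) ℂ} (hC : C.PosSemidef)
    (E : Matrix (Fin M) (Fin K) ℂ) : 0 ≤ ((Eᴴ * (C * E)).trace).re := by
  have h : (0:ℂ) ≤ (Eᴴ * (C * E)).trace := by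
    rw [Matrix.trace]
    apply Finset.sum_nonneg
    intro j _
    have h2 := hC.dotProduct_mulVec_nonneg (fun i => E i j)
    convert h2 using 1
    rfl
  simpa using (Complex.le_def.mp h).1

lemma trace_ctms {M K : ℕ} (X : Matrix (Fin M) (Fin K) ℂ) :
    (Xᴴ * X).trace = ((∑ j, ∑ i, Complex.normSq (X i j) : ℝ) : ℂ) := by
  rw [Matrix.trace]
  push_cast
  simp [Matrix.diag, Matrix.mul_apply, Matrix.conjTranspose_apply,
    Complex.normSq_eq_conj_mul_self]

lemma sum_normSq_pos {M K : ℕ} {X : Matrix (Fin M) (Fin K) ℂ} (hX : X ≠ 0) :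
    0 < (∑ j, ∑ i, Complex.normSq (X i j) : ℝ) := by
  obtain ⟨i, j, hij⟩ : ∃ i j, X i j ≠ 0 := by
    by_contra h
    push_neg at h
    exact hX (by ext i j; simp [h i j])
  have h1 : 0 < Complex.normSq (X i j) := Complex.normSq_pos.mpr hij
  have h2 : Complex.normSq (X i j) ≤ ∑ i', Complex.normSq (X i' j) :=
    Finset.single_le_sum (f := fun i' => Complex.normSq (X i' j)) (fun k _ => Complex.normSq_nonneg _) (Finset.mem_univ i)
  have h3 : (∑ i', Complex.normSq (X i' j)) ≤ ∑ j', ∑ i', Complex.normSq (X i' j') :=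
    Finset.single_le_sum (f := fun j' => ∑ i', Complex.normSq (X i' j'))
      (fun k _ => Finset.sum_nonneg fun _ _ => Complex.normSq_nonneg _) (Finset.mem_univ j)
  linarith

end aux

/-- **Theorem 3 (robust downlink MMSE precoder).** With `D = R̃ + (1/ρ) I`,
`C = Ghat Ghatᴴ + D`, downlink MSE-SD
`ε (B, α) = Re trace (α² Bᴴ (Ghat* Ghatᵀ + R̃*) B − α Ghatᵀ B − α Bᴴ Ghat*) + (α²/ρ + 1) K`,
and `γ = √(trace (Ghatᴴ C⁻² Ghat) / K) > 0`, the pair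
`(Bopt, αopt) = ((1/γ)(C⁻¹ Ghat)*, γ)` satisfies the power constraint with equality and is a
global minimizer of `ε` over `{(B, α) : trace (B Bᴴ) ≤ K}`, with minimum value
`trace ((I + Ghatᴴ D⁻¹ Ghat)⁻¹)`. -/
theorem robust_mmse_precoder_optimal
    {M K : ℕ} (hK : 1 ≤ K)
    (Ghat : Matrix (Fin M) (Fin K) ℂ) (hGhat : Ghat ≠ 0)
    (Rt : Matrix (Fin M) (Fin M) ℂ) (hRt : Rt.PosSemidef)
    (ρ : ℝ) (hρ : 0 < ρ)
    (D : Matrix (Fin M) (Fin M) ℂ) (hD : D = Rt + ((1 / ρ : ℝ) : ℂ) • 1)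
    (C : Matrix (Fin M) (Fin M) ℂ) (hC : C = Ghat * Ghatᴴ + D)
    (ε : Matrix (Fin M) (Fin K) ℂ → ℝ → ℝ)
    (hε : ∀ B α, ε B α =
      (((α ^ 2 : ℝ) • (Bᴴ * (mconj Ghat * Ghatᵀ + mconj Rt) * B)
        - α • (Ghatᵀ * B) - α • (Bᴴ * mconj Ghat)).trace).re + (α ^ 2 / ρ + 1) * K)
    (γ : ℝ) (hγ : γ = Real.sqrt (((Ghatᴴ * C⁻¹ * C⁻¹ * Ghat).trace).re / K))
    (Bopt : Matrix (Fin M) (Fin K) ℂ) (hBopt : Bopt = γ⁻¹ • mconj (C⁻¹ * Ghat))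
    (αopt : ℝ) (hαopt : αopt = γ) :
    0 < γ ∧
    (Bopt * Boptᴴ).trace = (K : ℂ) ∧
    (∀ (B : Matrix (Fin M) (Fin K) ℂ) (α : ℝ),
      (B * Bᴴ).trace ≤ (K : ℂ) → ε Bopt αopt ≤ ε B α) ∧
    (ε Bopt αopt : ℂ) = ((1 + Ghatᴴ * D⁻¹ * Ghat)⁻¹).trace := by
  have hK0 : (0:ℝ) < K := by exact_mod_cast hK
  -- positive definiteness
  have hDpd : D.PosDef := by
    rw [hD]
    refine Matrix.PosDef.posSemidef_add hRt ?_
    rw [Matrix.smul_one_eq_diagonal]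
    exact Matrix.PosDef.diagonal fun i => Complex.zero_lt_real.mpr (by positivity)
  have hGG : (Ghat * Ghatᴴ).PosSemidef := Matrix.posSemidef_self_mul_conjTranspose Ghat
  have hCpd : C.PosDef := hC ▸ Matrix.PosDef.posSemidef_add hGG hDpd
  have hCdet : IsUnit C.det := hCpd.det_pos.ne'.isUnit
  have hCinv : C * C⁻¹ = 1 := Matrix.mul_nonsing_inv _ hCdet
  have hCinv' : C⁻¹ * C = 1 := Matrix.nonsing_inv_mul _ hCdet
  have hCiH : (C⁻¹)ᴴ = C⁻¹ := hCpd.isHermitian.inv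
  set X : Matrix (Fin M) (Fin K) ℂ := C⁻¹ * Ghat with hX
  have hXH : Xᴴ = Ghatᴴ * C⁻¹ := by rw [hX, Matrix.conjTranspose_mul, hCiH]
  have hCX : C * X = Ghat := by rw [hX, ← Matrix.mul_assoc, hCinv, Matrix.one_mul]
  have hXC : Xᴴ * C = Ghatᴴ := by rw [hXH, Matrix.mul_assoc, hCinv', Matrix.mul_one]
  have hXne : X ≠ 0 := by
    intro h0
    apply hGhat
    rw [← hCX, h0, Matrix.mul_zero]
  -- the positive real t
  set t : ℝ := ((Ghatᴴ * C⁻¹ * C⁻¹ * Ghat).trace).re with ht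
  have hXX : Xᴴ * X = Ghatᴴ * C⁻¹ * C⁻¹ * Ghat := by
    rw [hXH, hX, Matrix.mul_assoc, Matrix.mul_assoc, Matrix.mul_assoc]
  have htval : t = (∑ j, ∑ i, Complex.normSq (X i j) : ℝ) := by
    rw [ht, ← hXX, trace_ctms, Complex.ofReal_re]
  have htpos : 0 < t := htval ▸ sum_normSq_pos hXne
  have hγpos : 0 < γ := by
    rw [hγ]
    exact Real.sqrt_pos.mpr (div_pos htpos hK0)
  have hγ2 : γ ^ 2 = t / K := by
    rw [hγ, Real.sq_sqrt (le_of_lt (div_pos htpos hK0))]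
  have htK : γ⁻¹ * γ⁻¹ * t = K := by
    have h1 : t = γ ^ 2 * K := by rw [hγ2]; field_simp
    rw [h1]
    field_simp [hγpos.ne']
  -- trace of X Xᴴ is the real t
  have hXXH : (X * Xᴴ).trace = (t : ℂ) := by
    rw [Matrix.trace_mul_comm, trace_ctms, htval]
  -- Part 2: power constraint with equality
  have hpow : (Bopt * Boptᴴ).trace = (K : ℂ) := by
    rw [hBopt]
    rw [Matrix.conjTranspose_smul, star_trivial, Matrix.smul_mul, Matrix.mul_smul,
      smul_smul, conjTranspose_mconj]
    have : mconj X * Xᵀ = mconj (X * Xᴴ) := by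
      rw [← mconj_conjTranspose X, ← mconj_mul]
    rw [this, Matrix.trace_smul, trace_mconj, hXXH]
    rw [Complex.star_def, Complex.conj_ofReal]
    rw [Complex.real_smul]
    exact_mod_cast htK
  -- rewrite ε via entrywise conjugation
  have hε' : ∀ (B : Matrix (Fin M) (Fin K) ℂ) (α : ℝ), ε B α =
      (((α ^ 2 : ℝ) • ((mconj B)ᴴ * ((Ghat * Ghatᴴ + Rt) * mconj B))
        - α • (Ghatᴴ * mconj B) - α • ((mconj B)ᴴ * Ghat)).trace).re + (α ^ 2 / ρ + 1) * K := by
    intro B α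
    have hm : (α ^ 2 : ℝ) • (Bᴴ * (mconj Ghat * Ghatᵀ + mconj Rt) * B)
        - α • (Ghatᵀ * B) - α • (Bᴴ * mconj Ghat)
        = mconj ((α ^ 2 : ℝ) • ((mconj B)ᴴ * ((Ghat * Ghatᴴ + Rt) * mconj B))
        - α • (Ghatᴴ * mconj B) - α • ((mconj B)ᴴ * Ghat)) := by
      simp only [mconj_sub, mconj_rsmul, mconj_mul, mconj_add, mconj_mconj,
        mconj_conjTranspose, conjTranspose_mconj, mconj_transpose, Matrix.mul_assoc]
    rw [hε B α, hm, re_trace_mconj]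
  -- completing the square
  have key : ∀ (W : Matrix (Fin M) (Fin K) ℂ) (α : ℝ),
      ((α • W - X)ᴴ * (C * (α • W - X)))
        = (α ^ 2 : ℝ) • (Wᴴ * (C * W)) - α • (Wᴴ * Ghat) - α • (Ghatᴴ * W) + Ghatᴴ * X := by
    intro W α
    have e1 : C * (α • W - X) = α • (C * W) - Ghat := by
      rw [Matrix.mul_sub, Matrix.mul_smul, hCX]
    have e2 : (α • W - X)ᴴ = α • Wᴴ - Xᴴ := by
      rw [Matrix.conjTranspose_sub, Matrix.conjTranspose_smul, star_trivial]
    have e3 : Xᴴ * (C * W) = Ghatᴴ * W := by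
      rw [← Matrix.mul_assoc, hXC]
    have e4 : Xᴴ * Ghat = Ghatᴴ * X := by
      rw [hXH, Matrix.mul_assoc]
    rw [e1, e2, Matrix.sub_mul, Matrix.mul_sub, Matrix.mul_sub, Matrix.smul_mul,
      Matrix.smul_mul, Matrix.mul_smul, Matrix.mul_smul, e3, e4, smul_smul, ← pow_two]
    abel
  have hCsplit : ∀ W : Matrix (Fin M) (Fin K) ℂ,
      Wᴴ * (C * W) = Wᴴ * ((Ghat * Ghatᴴ + Rt) * W) + (1/ρ : ℝ) • (Wᴴ * W) := by
    intro W
    have h1 : C * W = (Ghat * Ghatᴴ + Rt) * W + (1/ρ : ℝ) • W := by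
      have h2 : C = (Ghat * Ghatᴴ + Rt) + ((1/ρ : ℝ) : ℂ) • 1 := by
        rw [hC, hD, add_assoc]
      rw [h2, Matrix.add_mul, Matrix.smul_mul, Matrix.one_mul, ofReal_smul_mat]
    rw [h1, Matrix.mul_add, Matrix.mul_smul]
  -- the master decomposition of ε
  have decomp : ∀ (B : Matrix (Fin M) (Fin K) ℂ) (α : ℝ), ε B α
      = (((α • mconj B - X)ᴴ * (C * (α • mconj B - X))).trace).re
        + (α ^ 2 / ρ) * (K - (((mconj B)ᴴ * (mconj B)).trace).re)
        + (K - ((Ghatᴴ * X).trace).re) := by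
    intro B α
    rw [hε' B α, key (mconj B) α, hCsplit (mconj B)]
    simp only [smul_add, Matrix.trace_add, Matrix.trace_sub, Matrix.trace_smul,
      Complex.add_re, Complex.sub_re, Complex.smul_re, smul_eq_mul]
    ring
  -- constraint translation
  have hWtr : ∀ B : Matrix (Fin M) (Fin K) ℂ,
      (((mconj B)ᴴ * mconj B).trace).re = ((B * Bᴴ).trace).re := by
    intro B
    have h1 : (mconj B)ᴴ * mconj B = mconj (Bᴴ * B) := by
      rw [mconj_mul, mconj_conjTranspose, conjTranspose_mconj]
    rw [h1, re_trace_mconj, Matrix.trace_mul_comm]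
  -- lower bound
  have lower : ∀ (B : Matrix (Fin M) (Fin K) ℂ) (α : ℝ), (B * Bᴴ).trace ≤ (K : ℂ) →
      (K - ((Ghatᴴ * X).trace).re) ≤ ε B α := by
    intro B α hcon
    rw [decomp B α]
    have h1 : 0 ≤ (((α • mconj B - X)ᴴ * (C * (α • mconj B - X))).trace).re :=
      re_trace_quad_nonneg hCpd.posSemidef _
    have h2 : ((B * Bᴴ).trace).re ≤ K := by
      have h3 := (Complex.le_def.mp hcon).1
      simpa using h3
    have h3 : (((mconj B)ᴴ * (mconj B)).trace).re ≤ K := by rw [hWtr B]; exact h2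
    have h4 : 0 ≤ (α ^ 2 / ρ) * (K - (((mconj B)ᴴ * (mconj B)).trace).re) :=
      mul_nonneg (div_nonneg (sq_nonneg α) hρ.le) (by linarith)
    linarith
  -- value at the optimum
  have hWopt : mconj Bopt = γ⁻¹ • X := by rw [hBopt, mconj_rsmul, mconj_mconj]
  have hEopt : (γ : ℝ) • (γ⁻¹ • X) - X = (0 : Matrix (Fin M) (Fin K) ℂ) := by
    rw [smul_smul, mul_inv_cancel₀ hγpos.ne', one_smul, sub_self]
  have hWWopt : ((((γ⁻¹ : ℝ) • X)ᴴ * ((γ⁻¹ : ℝ) • X)).trace).re = K := by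
    rw [Matrix.conjTranspose_smul, star_trivial, Matrix.smul_mul, Matrix.mul_smul, smul_smul,
      Matrix.trace_smul, Complex.smul_re, smul_eq_mul]
    have h5 : ((Xᴴ * X).trace).re = t := by rw [hXX, ← ht]
    rw [h5, htK]
  have hopt : ε Bopt αopt = K - ((Ghatᴴ * X).trace).re := by
    rw [decomp Bopt αopt, hαopt, hWopt, hEopt, hWWopt]
    simp
  -- Sherman--Morrison / push-through identity
  have hDdet : IsUnit D.det := hDpd.det_pos.ne'.isUnit
  have hDG : D * (D⁻¹ * Ghat) = Ghat := by
    rw [← Matrix.mul_assoc, Matrix.mul_nonsing_inv _ hDdet, Matrix.one_mul]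
  set S : Matrix (Fin K) (Fin K) ℂ := 1 + Ghatᴴ * D⁻¹ * Ghat with hS
  have hSpd : S.PosDef :=
    Matrix.PosDef.add_posSemidef Matrix.PosDef.one
      (Matrix.PosSemidef.conjTranspose_mul_mul_same hDpd.inv.posSemidef Ghat)
  have hSdet : IsUnit S.det := hSpd.det_pos.ne'.isUnit
  have hS1 : C * (D⁻¹ * Ghat) = Ghat * S := by
    rw [hC, Matrix.add_mul, hDG, hS, Matrix.mul_add, Matrix.mul_one]
    simp [Matrix.mul_assoc, add_comm]
  have hXS : X * S = D⁻¹ * Ghat := by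
    have h6 := congrArg (fun Z => C⁻¹ * Z) hS1
    simp only [← Matrix.mul_assoc, hCinv', Matrix.one_mul] at h6
    rw [hX]
    exact h6.symm
  have hGX : Ghatᴴ * X = 1 - S⁻¹ := by
    have h1 : X = (D⁻¹ * Ghat) * S⁻¹ := by
      rw [← hXS, Matrix.mul_assoc, Matrix.mul_nonsing_inv _ hSdet, Matrix.mul_one]
    have h2 : Ghatᴴ * D⁻¹ * Ghat = S - 1 := by rw [hS, add_sub_cancel_left]
    rw [h1, ← Matrix.mul_assoc, ← Matrix.mul_assoc, h2, Matrix.sub_mul,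
      Matrix.mul_nonsing_inv _ hSdet, Matrix.one_mul]
  have htrGX : (Ghatᴴ * X).trace = (K : ℂ) - S⁻¹.trace := by
    rw [hGX, Matrix.trace_sub, Matrix.trace_one]
    simp
  have hSreal : ((S⁻¹.trace.re : ℝ) : ℂ) = S⁻¹.trace := by
    have h7 : star (S⁻¹.trace) = S⁻¹.trace := by
      rw [← Matrix.trace_conjTranspose, hSpd.inv.isHermitian.eq]
    rw [Complex.star_def] at h7
    exact Complex.conj_eq_iff_re.mp h7
  refine ⟨hγpos, hpow, fun B α hcon => hopt ▸ lower B α hcon, ?_⟩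
  rw [hopt]
  have h8 : ((Ghatᴴ * X).trace).re = K - S⁻¹.trace.re := by
    rw [htrGX]
    simp
  rw [h8]
  push_cast [hSreal]
  ring
end

section
/- Let (Ω, ℱ, P) be a probability space and let A : Ω → ℂ^{K×K} be an integrable (Bochner) random matrix such that A(ω) is Hermitian positive semidefinite for almost every ω. Then E[trace((I_K + A)⁻¹)] ≥ trace((I_K + E[A])⁻¹). -/
open scoped ComplexOrder
open Matrix MeasureTheory




variable {K : ℕ}

lemma diag_qf (N : Matrix (Fin K) (Fin K) ℂ) (i : Fin K) :
    star (Pi.single i 1 : Fin K → ℂ) ⬝ᵥ (N *ᵥ (Pi.single i 1)) = N i i := by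
  simp [dotProduct, mulVec, Pi.single_apply, Finset.mul_sum]

lemma key_ineq (B : Matrix (Fin K) (Fin K) ℂ) (hB : B.PosSemidef) (y : Fin K → ℂ) (i : Fin K) :
    y i + (starRingEnd ℂ) (y i) - star y ⬝ᵥ ((1 + B) *ᵥ y) ≤ ((1 + B)⁻¹) i i := by
  set M : Matrix (Fin K) (Fin K) ℂ := 1 + B with hMdef
  have hM : M.PosDef := Matrix.PosDef.add_posSemidef Matrix.PosDef.one hB
  have hdet : IsUnit M.det := isUnit_iff_ne_zero.mpr hM.det_pos.ne'
  set x : Fin K → ℂ := Pi.single i 1 with hx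
  set u : Fin K → ℂ := M⁻¹ *ᵥ x with hu
  have hstaru : star u = star x ᵥ* M⁻¹ := by
    rw [hu, star_mulVec, hM.isHermitian.inv.eq]
  have hMu : M *ᵥ u = x := by
    rw [hu, mulVec_mulVec, Matrix.mul_nonsing_inv _ hdet, one_mulVec]
  have h1 : star u ⬝ᵥ (M *ᵥ u) = M⁻¹ i i := by
    rw [hMu, hstaru, ← dotProduct_mulVec, diag_qf]
  have h2 : star u ⬝ᵥ (M *ᵥ y) = y i := by
    rw [hstaru, dotProduct_mulVec, vecMul_vecMul, Matrix.nonsing_inv_mul _ hdet, vecMul_one]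
    simp [hx, dotProduct, Pi.single_apply]
  have h3 : star y ⬝ᵥ (M *ᵥ u) = (starRingEnd ℂ) (y i) := by
    rw [hMu]; simp [hx, dotProduct, Pi.single_apply]
  have hnn := hM.posSemidef.dotProduct_mulVec_nonneg (u - y)
  have expand : star (u - y) ⬝ᵥ (M *ᵥ (u - y))
      = M⁻¹ i i - (y i + (starRingEnd ℂ) (y i) - star y ⬝ᵥ (M *ᵥ y)) := by
    rw [star_sub, mulVec_sub, sub_dotProduct, dotProduct_sub, dotProduct_sub, h1, h2, h3]
    ring
  rw [expand] at hnn
  exact sub_nonneg.mp hnn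

lemma eq_case (C : Matrix (Fin K) (Fin K) ℂ) (hC : C.PosSemidef) (i : Fin K)
    (y : Fin K → ℂ) (hy : y = (1 + C)⁻¹ *ᵥ Pi.single i 1) :
    y i + (starRingEnd ℂ) (y i) - star y ⬝ᵥ ((1 + C) *ᵥ y) = ((1 + C)⁻¹) i i := by
  set M : Matrix (Fin K) (Fin K) ℂ := 1 + C with hMdef
  have hM : M.PosDef := Matrix.PosDef.add_posSemidef Matrix.PosDef.one hC
  have hdet : IsUnit M.det := isUnit_iff_ne_zero.mpr hM.det_pos.ne'
  have hyi : y i = M⁻¹ i i := by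
    rw [hy]; simp [mulVec, dotProduct, Pi.single_apply]
  have hconj : (starRingEnd ℂ) (M⁻¹ i i) = M⁻¹ i i := by
    conv_rhs => rw [← hM.isHermitian.inv.eq]
    simp [conjTranspose_apply]
  have hMy : M *ᵥ y = Pi.single i 1 := by
    rw [hy, mulVec_mulVec, Matrix.mul_nonsing_inv _ hdet, one_mulVec]
  have hq : star y ⬝ᵥ (M *ᵥ y) = M⁻¹ i i := by
    rw [hMy]
    have : star y ⬝ᵥ (Pi.single i 1 : Fin K → ℂ) = (starRingEnd ℂ) (y i) := by
      simp [dotProduct, Pi.single_apply]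
    rw [this, hyi, hconj]
  rw [hyi, hq, hconj]; ring

lemma bounds (B : Matrix (Fin K) (Fin K) ℂ) (hB : B.PosSemidef) (i : Fin K) :
    0 ≤ ((1 + B)⁻¹) i i ∧ ((1 + B)⁻¹) i i ≤ 1 := by
  set M : Matrix (Fin K) (Fin K) ℂ := 1 + B with hMdef
  have hM : M.PosDef := Matrix.PosDef.add_posSemidef Matrix.PosDef.one hB
  have hdet : IsUnit M.det := isUnit_iff_ne_zero.mpr hM.det_pos.ne'
  have hinv : (M⁻¹).PosSemidef := hM.posSemidef.inv
  have h0 : 0 ≤ M⁻¹ i i := by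
    have := hinv.dotProduct_mulVec_nonneg (Pi.single i 1)
    rwa [diag_qf] at this
  refine ⟨h0, ?_⟩
  set u : Fin K → ℂ := M⁻¹ *ᵥ (Pi.single i 1) with hu
  have hui : u i = M⁻¹ i i := by
    rw [hu]; simp [mulVec, dotProduct, Pi.single_apply]
  have hMu : M *ᵥ u = Pi.single i 1 := by
    rw [hu, mulVec_mulVec, Matrix.mul_nonsing_inv _ hdet, one_mulVec]
  have hconj : (starRingEnd ℂ) (M⁻¹ i i) = M⁻¹ i i := by
    conv_rhs => rw [← hM.isHermitian.inv.eq]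
    simp [conjTranspose_apply]
  -- star u ⬝ᵥ u ≤ star u ⬝ᵥ M *ᵥ u = conj (u i) = M⁻¹ i i
  have h1 : star u ⬝ᵥ u ≤ M⁻¹ i i := by
    have hBu := hB.dotProduct_mulVec_nonneg u
    have : star u ⬝ᵥ (M *ᵥ u) = star u ⬝ᵥ u + star u ⬝ᵥ (B *ᵥ u) := by
      rw [hMdef, add_mulVec, one_mulVec, dotProduct_add]
    have h2 : star u ⬝ᵥ (M *ᵥ u) = M⁻¹ i i := by
      rw [hMu]
      have : star u ⬝ᵥ (Pi.single i 1 : Fin K → ℂ) = (starRingEnd ℂ) (u i) := by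
        simp [dotProduct, Pi.single_apply]
      rw [this, hui, hconj]
    calc star u ⬝ᵥ u ≤ star u ⬝ᵥ u + star u ⬝ᵥ (B *ᵥ u) := le_add_of_nonneg_right hBu
    _ = M⁻¹ i i := by rw [← this, h2]
  have h3 : (starRingEnd ℂ) (u i) * u i ≤ star u ⬝ᵥ u := by
    have : star u ⬝ᵥ u = ∑ k, (starRingEnd ℂ) (u k) * u k := by
      simp [dotProduct]
    rw [this]
    refine Finset.single_le_sum (f := fun k => (starRingEnd ℂ) (u k) * u k) ?_ (Finset.mem_univ i)
    intro k _
    exact star_mul_self_nonneg (u k)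
  have hsq : M⁻¹ i i * M⁻¹ i i ≤ M⁻¹ i i := by
    calc M⁻¹ i i * M⁻¹ i i = (starRingEnd ℂ) (u i) * u i := by rw [hui, hconj]
    _ ≤ star u ⬝ᵥ u := h3
    _ ≤ M⁻¹ i i := h1
  -- now real arithmetic
  set r : ℝ := (M⁻¹ i i).re with hr
  have him : (M⁻¹ i i).im = 0 := by
    have := h0; rw [Complex.le_def] at this; exact this.2.symm
  have hre : 0 ≤ r := by
    have := h0; rw [Complex.le_def] at this; exact this.1
  have hsq' : r * r ≤ r := by
    rw [Complex.le_def] at hsq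
    have := hsq.1
    simpa [Complex.mul_re, him] using this
  have : r ≤ 1 := by nlinarith
  rw [Complex.le_def]
  refine ⟨by simpa using this, by simp [him]⟩


variable {K : ℕ}

noncomputable def entryCLM (i j : Fin K) : (Fin K → Fin K → ℂ) →L[ℂ] ℂ :=
  (ContinuousLinearMap.proj j : (Fin K → ℂ) →L[ℂ] ℂ).comp
    (ContinuousLinearMap.proj i : (Fin K → Fin K → ℂ) →L[ℂ] (Fin K → ℂ))

@[simp] lemma entryCLM_apply (i j : Fin K) (B : Fin K → Fin K → ℂ) :
    entryCLM i j B = B i j := rfl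

noncomputable def Lq (y : Fin K → ℂ) : (Fin K → Fin K → ℂ) →L[ℂ] ℂ :=
  ∑ i, ∑ j, ((starRingEnd ℂ) (y i) * y j) • entryCLM i j

lemma Lq_apply (y : Fin K → ℂ) (B : Fin K → Fin K → ℂ) :
    Lq y B = star y ⬝ᵥ ((Matrix.of B) *ᵥ y) := by
  simp only [Lq, ContinuousLinearMap.sum_apply, ContinuousLinearMap.smul_apply, entryCLM_apply,
    dotProduct, mulVec, Matrix.of_apply, Pi.star_apply, RCLike.star_def, Finset.mul_sum,
    smul_eq_mul]
  refine Finset.sum_congr rfl fun i _ => Finset.sum_congr rfl fun j _ => by ring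

lemma int_nonneg {Ω : Type*} [MeasurableSpace Ω] {P : Measure Ω} {f : Ω → ℂ}
    (hf : Integrable f P) (h : ∀ᵐ ω ∂P, 0 ≤ f ω) : 0 ≤ ∫ ω, f ω ∂P := by
  rw [Complex.le_def]
  have hre := integral_re hf
  have him := integral_im hf
  simp only [RCLike.re_to_complex, RCLike.im_to_complex] at hre him
  rw [← hre, ← him] at *
  constructor
  · rw [hre]
    simp only [Complex.zero_re]
    refine integral_nonneg_of_ae ?_
    filter_upwards [h] with ω hω
    rw [Complex.le_def] at hω; exact hω.1
  · rw [him]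
    simp only [Complex.zero_im]
    have : (fun ω => (f ω).im) =ᵐ[P] fun _ => (0:ℝ) := by
      filter_upwards [h] with ω hω
      rw [Complex.le_def] at hω; exact hω.2.symm
    rw [integral_congr_ae this]; simp

lemma int_mono {Ω : Type*} [MeasurableSpace Ω] {P : Measure Ω} {f g : Ω → ℂ}
    (hf : Integrable f P) (hg : Integrable g P) (h : ∀ᵐ ω ∂P, f ω ≤ g ω) :
    ∫ ω, f ω ∂P ≤ ∫ ω, g ω ∂P := by
  have : (0:ℂ) ≤ ∫ ω, (g ω - f ω) ∂P :=
    int_nonneg (hg.sub hf) (by filter_upwards [h] with ω hω; exact sub_nonneg.mpr hω)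
  rw [integral_sub hg hf] at this
  exact sub_nonneg.mp this


variable {K : ℕ}

lemma meas_entry (i : Fin K) :
    Measurable (fun B : Fin K → Fin K → ℂ => ((1 + Matrix.of B)⁻¹) i i) := by
  have hc : Continuous (fun B : Fin K → Fin K → ℂ => (1 + Matrix.of B : Matrix (Fin K) (Fin K) ℂ)) := by
    exact continuous_const.add continuous_id
  have hdet : Continuous (fun B : Fin K → Fin K → ℂ => (1 + Matrix.of B).det) :=
    hc.matrix_det
  have hadj : Continuous (fun B : Fin K → Fin K → ℂ => (1 + Matrix.of B).adjugate i i) := by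
    exact ((continuous_apply i).comp ((continuous_apply i).comp hc.matrix_adjugate))
  have : (fun B : Fin K → Fin K → ℂ => ((1 + Matrix.of B)⁻¹) i i)
      = fun B => ((1 + Matrix.of B).det)⁻¹ * (1 + Matrix.of B).adjugate i i := by
    funext B
    rw [Matrix.inv_def, Ring.inverse_eq_inv']
    simp [Matrix.smul_apply, smul_eq_mul]
  rw [this]
  exact (hdet.measurable.inv).mul hadj.measurable


/-- Matrix-valued Jensen inequality step: for an integrable random `K × K` complex matrix `A`
that is almost surely Hermitian positive semidefinite,
`E[trace ((I + A)⁻¹)] ≥ trace ((I + E[A])⁻¹)`. -/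
theorem jensen_trace_inv
    {Ω : Type*} [MeasurableSpace Ω] (P : Measure Ω) [IsProbabilityMeasure P]
    {K : ℕ} (A : Ω → Fin K → Fin K → ℂ)
    (hInt : Integrable A P)
    (hPSD : ∀ᵐ ω ∂P, (Matrix.of (A ω)).PosSemidef) :
    ∫ ω, ((1 + Matrix.of (A ω))⁻¹).trace ∂P ≥
      ((1 + Matrix.of (∫ ω, A ω ∂P))⁻¹).trace := by
  classical
  set C : Matrix (Fin K) (Fin K) ℂ := Matrix.of (∫ ω, A ω ∂P) with hC
  -- entry integrals
  have hentval : ∀ i j, (∫ ω, A ω ∂P) i j = ∫ ω, A ω i j ∂P := by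
    intro i j
    exact ((entryCLM i j).integral_comp_comm hInt).symm
  -- quadratic forms of the expectation matrix
  have hqval : ∀ y : Fin K → ℂ, star y ⬝ᵥ (C *ᵥ y) = ∫ ω, star y ⬝ᵥ ((Matrix.of (A ω)) *ᵥ y) ∂P := by
    intro y
    have h1 := (Lq y).integral_comp_comm hInt
    rw [Lq_apply] at h1
    rw [← h1]
    exact integral_congr_ae (Filter.Eventually.of_forall fun ω => Lq_apply y (A ω))
  have hqint : ∀ y : Fin K → ℂ, Integrable (fun ω => star y ⬝ᵥ ((Matrix.of (A ω)) *ᵥ y)) P := by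
    intro y
    have := (Lq y).integrable_comp hInt
    exact this.congr (Filter.Eventually.of_forall fun ω => Lq_apply y (A ω))
  -- C is PSD
  have hCpsd : C.PosSemidef := by
    refine Matrix.posSemidef_iff_dotProduct_mulVec.mpr ⟨?_, ?_⟩
    · show Cᴴ = C
      ext i j
      have : Cᴴ i j = (starRingEnd ℂ) ((∫ ω, A ω ∂P) j i) := rfl
      rw [this, hentval j i, ← integral_conj]
      rw [show C i j = ∫ ω, A ω i j ∂P from hentval i j]
      refine integral_congr_ae ?_
      filter_upwards [hPSD] with ω hω
      have := congrFun (congrFun hω.1 i) j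
      simpa [Matrix.conjTranspose_apply] using this
    · intro y
      rw [hqval y]
      refine int_nonneg (hqint y) ?_
      filter_upwards [hPSD] with ω hω
      exact hω.dotProduct_mulVec_nonneg y
  -- pointwise diagonal integrand
  set f : Fin K → Ω → ℂ := fun i ω => ((1 + Matrix.of (A ω))⁻¹) i i with hf
  have hfmeas : ∀ i, AEStronglyMeasurable (f i) P := by
    intro i
    exact ((meas_entry i).comp_aemeasurable hInt.1.aemeasurable).aestronglyMeasurable
  have hfint : ∀ i, Integrable (f i) P := by
    intro i
    refine Integrable.mono' (integrable_const (1:ℝ)) (hfmeas i) ?_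
    filter_upwards [hPSD] with ω hω
    obtain ⟨h0, h1⟩ := bounds _ hω i
    rw [Complex.le_def] at h0 h1
    have him : (f i ω).im = 0 := h0.2.symm
    have : ‖f i ω‖ = |(f i ω).re| := by
      rw [Complex.norm_def, Complex.normSq_apply, him]
      rw [show (f i ω).re * (f i ω).re + 0 * 0 = (f i ω).re ^ 2 by ring]
      exact Real.sqrt_sq_eq_abs _
    rw [this, abs_of_nonneg (by simpa using h0.1)]
    simpa using h1.1
  -- per-index inequality
  have hkey : ∀ i : Fin K, ((1 + C)⁻¹) i i ≤ ∫ ω, f i ω ∂P := by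
    intro i
    set y : Fin K → ℂ := (1 + C)⁻¹ *ᵥ Pi.single i 1 with hy
    set g : Ω → ℂ := fun ω => y i + (starRingEnd ℂ) (y i)
        - star y ⬝ᵥ ((1 + Matrix.of (A ω)) *ᵥ y) with hg
    have hgint : Integrable g P := by
      have : g = fun ω => (y i + (starRingEnd ℂ) (y i) - star y ⬝ᵥ y)
          - star y ⬝ᵥ ((Matrix.of (A ω)) *ᵥ y) := by
        funext ω
        rw [hg]
        simp only [add_mulVec, one_mulVec, dotProduct_add]
        ring
      rw [this]
      exact (integrable_const _).sub (hqint y)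
    have hgval : ∫ ω, g ω ∂P = ((1 + C)⁻¹) i i := by
      have hsplit : ∀ ω, g ω = (y i + (starRingEnd ℂ) (y i) - star y ⬝ᵥ y)
          - star y ⬝ᵥ ((Matrix.of (A ω)) *ᵥ y) := by
        intro ω
        rw [hg]
        simp only [add_mulVec, one_mulVec, dotProduct_add]
        ring
      calc ∫ ω, g ω ∂P
          = ∫ ω, ((y i + (starRingEnd ℂ) (y i) - star y ⬝ᵥ y)
              - star y ⬝ᵥ ((Matrix.of (A ω)) *ᵥ y)) ∂P :=
            integral_congr_ae (Filter.Eventually.of_forall fun ω => hsplit ω)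
        _ = (y i + (starRingEnd ℂ) (y i) - star y ⬝ᵥ y) - ∫ ω, star y ⬝ᵥ ((Matrix.of (A ω)) *ᵥ y) ∂P := by
            rw [integral_sub (integrable_const _) (hqint y), integral_const]
            simp
        _ = (y i + (starRingEnd ℂ) (y i) - star y ⬝ᵥ y) - star y ⬝ᵥ (C *ᵥ y) := by rw [hqval y]
        _ = y i + (starRingEnd ℂ) (y i) - star y ⬝ᵥ ((1 + C) *ᵥ y) := by
            simp only [add_mulVec, one_mulVec, dotProduct_add]
            ring
        _ = ((1 + C)⁻¹) i i := eq_case C hCpsd i y hy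
    calc ((1 + C)⁻¹) i i = ∫ ω, g ω ∂P := hgval.symm
      _ ≤ ∫ ω, f i ω ∂P := by
          refine int_mono hgint (hfint i) ?_
          filter_upwards [hPSD] with ω hω
          exact key_ineq (Matrix.of (A ω)) hω y i
  -- sum up
  have htr : ∀ N : Matrix (Fin K) (Fin K) ℂ, N.trace = ∑ i, N i i := fun N => rfl
  have hswap : ∫ ω, ((1 + Matrix.of (A ω))⁻¹).trace ∂P = ∑ i, ∫ ω, f i ω ∂P := by
    rw [← integral_finset_sum _ (fun i _ => hfint i)]
    exact integral_congr_ae (Filter.Eventually.of_forall fun ω => htr _)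
  rw [ge_iff_le, htr, hswap]
  exact Finset.sum_le_sum fun i _ => hkey i
end

section
/- Let Ω be a K×K complex Hermitian positive semidefinite matrix. Then trace((I_K + Ω)⁻¹) ≥ Σ_{i=1}^{K} 1/(1 + Ω_{ii}), and equality holds if and only if Ω is a diagonal matrix. -/
open scoped ComplexOrder
open Matrix

lemma key_cs {K : ℕ} {A : Matrix (Fin K) (Fin K) ℂ} (hA : A.PosDef) (i : Fin K) :
    1 ≤ (A i i).re * (A⁻¹ i i).re ∧
    ((A i i).re * (A⁻¹ i i).re = 1 → ∀ j, j ≠ i → A j i = 0) := by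
  set x : Fin K → ℂ := Pi.single i 1 with hxdef
  set y : Fin K → ℂ := A⁻¹ *ᵥ x with hydef
  have hAy : A *ᵥ y = x := by
    rw [hydef, mulVec_mulVec, Matrix.mul_nonsing_inv _ (isUnit_iff_isUnit_det _ |>.1 hA.isUnit),
      one_mulVec]
  have hx0 : x ≠ 0 := by
    intro h0
    have := congrFun h0 i
    simp [hxdef] at this
  have hstarxx : star x ⬝ᵥ x = 1 := by
    simp [hxdef, dotProduct, Pi.single_apply, apply_ite]
  have hxAx : star x ⬝ᵥ (A *ᵥ x) = A i i := by
    simp [hxdef, dotProduct, mulVec, Pi.single_apply, mul_ite, apply_ite]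
  have hAxj : ∀ j, (A *ᵥ x) j = A j i := by
    intro j
    simp [hxdef, mulVec, dotProduct, Pi.single_apply, mul_ite]
  have hyx : star y ⬝ᵥ x = A⁻¹ i i := by
    have hyi : y i = A⁻¹ i i := by
      simp [hydef, hxdef, mulVec, dotProduct, Pi.single_apply, mul_ite]
    have hherm := hA.inv.isHermitian.apply i i
    simp only [hxdef, dotProduct, Pi.single_apply, mul_ite, mul_one, mul_zero,
      Finset.sum_ite_eq', Finset.mem_univ, if_true, Pi.star_apply, hyi]
    exact hherm
  clear_value x y
  have hyAx : star y ⬝ᵥ (A *ᵥ x) = 1 := by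
    have h1 : star y ᵥ* A = star (A *ᵥ y) := by
      rw [star_mulVec, hA.isHermitian.eq]
    rw [dotProduct_mulVec, h1, hAy, hstarxx]
  set a : ℝ := (A i i).re with hadef
  set b : ℝ := (A⁻¹ i i).re with hbdef
  have ha : ((a : ℝ) : ℂ) = A i i := hA.isHermitian.coe_re_apply_self i
  have hb : ((b : ℝ) : ℂ) = A⁻¹ i i := hA.inv.isHermitian.coe_re_apply_self i
  have hapos : 0 < a := by
    have := hA.re_dotProduct_pos hx0
    rwa [hxAx] at this
  set w : Fin K → ℂ := (a : ℂ) • y - x with hwdef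
  have hq : star w ⬝ᵥ (A *ᵥ w) = ((a ^ 2 * b - a : ℝ) : ℂ) := by
    have hAw : A *ᵥ w = (a : ℂ) • x - A *ᵥ x := by
      rw [hwdef, mulVec_sub, mulVec_smul, hAy]
    have hsw : star w = (a : ℂ) • star y - star x := by
      simp [hwdef, star_smul, Complex.star_def, Complex.conj_ofReal]
    rw [hAw, hsw, sub_dotProduct, dotProduct_sub, dotProduct_sub, smul_dotProduct,
      smul_dotProduct, dotProduct_smul, dotProduct_smul, hyx, hyAx, hstarxx, hxAx,
      ← ha, ← hb]
    simp only [smul_eq_mul]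
    push_cast
    ring
  refine ⟨?_, ?_⟩
  · have h0 := hA.posSemidef.dotProduct_mulVec_nonneg w
    rw [hq, Complex.zero_le_real] at h0
    nlinarith
  · intro heq j hj
    have hw0 : w = 0 := by
      by_contra hw
      have := hA.dotProduct_mulVec_pos hw
      rw [hq] at this
      have hz : a ^ 2 * b - a = 0 := by nlinarith
      rw [hz] at this
      simp at this
    have hxy : x = (a : ℂ) • y := (sub_eq_zero.mp hw0).symm
    have hAx : A *ᵥ x = (a : ℂ) • x := by
      conv_lhs => rw [hxy]
      rw [mulVec_smul, hAy]
    have := congrFun hAx j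
    rw [hAxj j] at this
    rw [this]
    simp [hxdef, Pi.single_apply, if_neg hj]

lemma psd_diag_nonneg {K : ℕ} {Om : Matrix (Fin K) (Fin K) ℂ} (hOm : Om.PosSemidef) (i : Fin K) :
    0 ≤ (Om i i).re ∧ Om i i = ((Om i i).re : ℂ) := by
  refine ⟨?_, (hOm.isHermitian.coe_re_apply_self i).symm⟩
  have h := hOm.dotProduct_mulVec_nonneg (Pi.single i 1)
  have : star (Pi.single i (1:ℂ)) ⬝ᵥ (Om *ᵥ Pi.single i 1) = Om i i := by
    simp [dotProduct, mulVec, Pi.single_apply, mul_ite, apply_ite]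
  rw [this] at h
  exact (Complex.le_def.mp h).1

/-- Schwartz-inequality lemma: for a Hermitian positive semidefinite `K × K` matrix `Ω`,
`trace ((I + Ω)⁻¹) ≥ ∑ i, 1/(1 + Ω i i)`, with equality if and only if `Ω` is diagonal. -/
theorem trace_inv_ge_sum_inv_diag
    {K : ℕ} (Om : Matrix (Fin K) (Fin K) ℂ) (hOm : Om.PosSemidef) :
    ((1 + Om)⁻¹).trace ≥ ∑ i, 1 / (1 + Om i i) ∧
    (((1 + Om)⁻¹).trace = ∑ i, 1 / (1 + Om i i) ↔ Om.IsDiag) := by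
  set A : Matrix (Fin K) (Fin K) ℂ := 1 + Om with hAdef
  have hA : A.PosDef := Matrix.PosDef.one.add_posSemidef hOm
  have hdiagA : ∀ i, A i i = 1 + Om i i := by
    intro i; simp [hAdef, Matrix.add_apply, Matrix.one_apply_eq]
  have hre : ∀ i, (A i i).re = 1 + (Om i i).re := by
    intro i; rw [hdiagA i]; simp
  have hApos : ∀ i, 0 < (A i i).re := by
    intro i; rw [hre i]; linarith [(psd_diag_nonneg hOm i).1]
  have hcoe : ∀ i, (1 : ℂ) + Om i i = (((A i i).re : ℝ) : ℂ) := by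
    intro i
    rw [← hdiagA i]
    exact (hA.isHermitian.coe_re_apply_self i).symm
  have hinvcoe : ∀ i, A⁻¹ i i = (((A⁻¹ i i).re : ℝ) : ℂ) :=
    fun i => (hA.inv.isHermitian.coe_re_apply_self i).symm
  have htrace : A⁻¹.trace = ∑ i, A⁻¹ i i := by
    simp [Matrix.trace, Matrix.diag]
  have hterm : ∀ i : Fin K, 1 / (1 + Om i i) ≤ A⁻¹ i i := by
    intro i
    have hkey := (key_cs hA i).1
    rw [hcoe i, hinvcoe i, ← Complex.ofReal_one, ← Complex.ofReal_div, Complex.real_le_real]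
    rw [div_le_iff₀ (hApos i)]
    linarith [hkey]
  constructor
  · rw [htrace]
    exact Finset.sum_le_sum (fun i _ => hterm i)
  constructor
  · intro h
    rw [htrace] at h
    have heq := (Finset.sum_eq_sum_iff_of_le (fun i _ => hterm i)).mp h.symm
    intro i j hij
    have hj := heq j (Finset.mem_univ j)
    -- termwise equality at j gives column j of A is e_j
    have hcol : ∀ k, k ≠ j → A k j = 0 := by
      apply (key_cs hA j).2
      rw [hcoe j, hinvcoe j, ← Complex.ofReal_one, ← Complex.ofReal_div,
        Complex.ofReal_inj] at hj
      have hne := (hApos j).ne'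
      rw [← hj]
      field_simp
    have hAij := hcol i hij
    have : A i j = Om i j := by
      simp [hAdef, Matrix.add_apply, Matrix.one_apply_ne hij]
    rw [← this, hAij]
  · intro hD
    have hv : ∀ i, (1 : ℂ) + Om i i ≠ 0 := by
      intro i h0
      rw [hcoe i] at h0
      exact (hApos i).ne' (by exact_mod_cast h0)
    have hAdiag : A = diagonal (fun i => 1 + Om i i) := by
      ext i j
      by_cases h : i = j
      · subst h
        rw [diagonal_apply_eq, hdiagA i]
      · rw [diagonal_apply_ne _ h, hAdef]
        simp [Matrix.add_apply, Matrix.one_apply_ne h, hD h]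
    have hAinv : A⁻¹ = diagonal (fun i => (1 + Om i i)⁻¹) := by
      apply Matrix.inv_eq_right_inv
      have hfun : (fun i => (1 + Om i i) * (1 + Om i i)⁻¹) = fun _ => (1 : ℂ) :=
        funext fun i => mul_inv_cancel₀ (hv i)
      rw [hAdiag, diagonal_mul_diagonal, hfun, diagonal_one]
    rw [htrace, hAinv]
    refine Finset.sum_congr rfl fun i _ => ?_
    rw [diagonal_apply_eq, one_div]
end

section
/- (Theorem 4) Let R_1, …, R_K be M×M complex Hermitian positive semidefinite matrices, let ρᵖ > 0, τ > 0, ρᵗ > 0, and set c = 1/(ρᵖτ). For a pilot assignment π : {1,…,K} → {1,…,τ′} define C_{π_k}(π) = Σ_{ℓ : π_ℓ = π_k} R_ℓ + c·I, D(π) = Σ_{k=1}^{K} (R_k − R_k·C_{π_k}(π)⁻¹·R_k) + (1/ρᵗ)·I, and the K×K matrix Ω(π) with entries Ω(π)_{ij} = trace(C_{π_i}(π)⁻¹·R_i·D(π)⁻¹·R_j)·δ(π_i − π_j). Define ω_i = trace((R_i + c·I)⁻¹·R_i·[Σ_{k=1}^{K}(R_k − R_k·(R_k + c·I)⁻¹·R_k)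 + (1/ρᵗ)·I]⁻¹·R_i). Then for every pilot assignment π the matrix Ω(π) is Hermitian positive semidefinite and trace((I_K + Ω(π))⁻¹) ≥ Σ_{i=1}^{K} 1/(1 + ω_i); moreover, if trace(R_i·R_j) = 0 for all i ≠ j with π_i = π_j, then equality holds. -/
open scoped ComplexOrder
open Matrix

namespace Th4Aux
set_option linter.unusedSectionVars false
variable {n : Type*} [Fintype n] [DecidableEq n]

lemma star_dot_herm {A : Matrix n n ℂ} (hA : A.IsHermitian) (a b : n → ℂ) :
    star (A *ᵥ a) ⬝ᵥ b = star a ⬝ᵥ (A *ᵥ b) := by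
  rw [star_mulVec, hA.eq, dotProduct_mulVec]

lemma quad_sub (A : Matrix n n ℂ) (a b : n → ℂ) :
    star (a - b) ⬝ᵥ A *ᵥ (a - b) =
      star a ⬝ᵥ A *ᵥ a - star a ⬝ᵥ A *ᵥ b - star b ⬝ᵥ A *ᵥ a + star b ⬝ᵥ A *ᵥ b := by
  rw [star_sub, sub_dotProduct, mulVec_sub, dotProduct_sub, dotProduct_sub]
  ring

lemma single_dot (A : Matrix n n ℂ) (i j : n) :
    star (Pi.single i 1) ⬝ᵥ A *ᵥ (Pi.single j (1:ℂ)) = A i j := by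
  simp [dotProduct, mulVec, Pi.single_apply, Finset.sum_ite_eq, mul_comm]

lemma diag_nonneg {A : Matrix n n ℂ} (hA : A.PosSemidef) (i : n) : 0 ≤ A i i := by
  have h := hA.dotProduct_mulVec_nonneg (Pi.single i 1)
  rwa [single_dot] at h

lemma trace_nonneg {A : Matrix n n ℂ} (hA : A.PosSemidef) : 0 ≤ A.trace := by
  rw [Matrix.trace]
  exact Finset.sum_nonneg fun i _ => diag_nonneg hA i

open scoped MatrixOrder in
lemma trace_mul_nonneg {A B : Matrix n n ℂ} (hA : A.PosSemidef) (hB : B.PosSemidef) :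
    0 ≤ (A * B).trace := by
  have h1 : A * B = (CFC.sqrt A) * ((CFC.sqrt A) * B) := by
    rw [← Matrix.mul_assoc, CFC.sqrt_mul_sqrt_self A hA.nonneg]
  rw [h1, Matrix.trace_mul_comm]
  have h2 : (CFC.sqrt A) * B * (CFC.sqrt A) = (CFC.sqrt A)ᴴ * B * (CFC.sqrt A) := by
    rw [(CFC.sqrt_nonneg A).posSemidef.isHermitian.eq]
  exact trace_nonneg (h2 ▸ hB.conjTranspose_mul_mul_same (CFC.sqrt A))

lemma sandwich_psd {R X : Matrix n n ℂ} (hR : R.IsHermitian) (hX : X.PosSemidef) :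
    (R * X * R).PosSemidef := by
  nth_rewrite 1 [← hR.eq]
  exact hX.conjTranspose_mul_mul_same R

lemma posDef_smul_one {r : ℝ} (hr : 0 < r) :
    (((r : ℂ)) • (1 : Matrix n n ℂ)).PosDef := by
  rw [smul_one_eq_diagonal]
  exact Matrix.posDef_diagonal_iff.mpr fun i => by
    simpa using (Complex.zero_lt_real).mpr hr

lemma posSemidef_sum {ι : Type*} (s : Finset ι) (f : ι → Matrix n n ℂ)
    (h : ∀ i ∈ s, (f i).PosSemidef) : (∑ i ∈ s, f i).PosSemidef :=
  Finset.sum_induction f _ (fun _ _ ha hb => ha.add hb) Matrix.PosSemidef.zero h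

lemma schur_psd {R C : Matrix n n ℂ} (hR : R.PosSemidef) (hC : C.PosDef)
    (hCR : (C - R).PosSemidef) : (R - R * C⁻¹ * R).PosSemidef := by
  have hCunit : C * C⁻¹ = 1 := mul_nonsing_inv C (C.isUnit_iff_isUnit_det.mp hC.isUnit)
  have hCinvH : (C⁻¹).IsHermitian := hC.inv.isHermitian
  rw [posSemidef_iff_dotProduct_mulVec]
  constructor
  · have : (R - R * C⁻¹ * R)ᴴ = Rᴴ - Rᴴ * C⁻¹ᴴ * Rᴴ := by
      simp [conjTranspose_sub, conjTranspose_mul, Matrix.mul_assoc]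
    rw [Matrix.IsHermitian, this, hR.isHermitian.eq, hCinvH.eq]
  · intro x
    set u : n → ℂ := C⁻¹ *ᵥ (R *ᵥ x) with hu
    set Φ : ℂ := star x ⬝ᵥ (R * C⁻¹ * R) *ᵥ x with hΦ
    have hCu : C *ᵥ u = R *ᵥ x := by
      rw [hu, mulVec_mulVec, hCunit, one_mulVec]
    have hT' : star x ⬝ᵥ R *ᵥ u = Φ := by
      rw [hu, mulVec_mulVec, mulVec_mulVec, hΦ]
    have hT : star u ⬝ᵥ R *ᵥ x = Φ := by
      rw [hu, star_dot_herm hCinvH, star_dot_herm hR.isHermitian,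
        mulVec_mulVec, mulVec_mulVec, hΦ]
    have hCuQ : star u ⬝ᵥ C *ᵥ u = Φ := by rw [hCu, hT]
    have hRu : star u ⬝ᵥ R *ᵥ u ≤ Φ := by
      have h := hCR.dotProduct_mulVec_nonneg u
      rw [sub_mulVec, dotProduct_sub, sub_nonneg, hCuQ] at h
      exact h
    have hq := hR.dotProduct_mulVec_nonneg (x - u)
    rw [quad_sub, hT', hT] at hq
    rw [sub_mulVec, dotProduct_sub, sub_nonneg, ← hΦ]
    have key : star x ⬝ᵥ R *ᵥ x - Φ =
        (star x ⬝ᵥ R *ᵥ x - Φ - Φ + star u ⬝ᵥ R *ᵥ u) + (Φ - star u ⬝ᵥ R *ᵥ u) := by ring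
    have h2 : 0 ≤ star x ⬝ᵥ R *ᵥ x - Φ := by
      rw [key]; exact add_nonneg hq (sub_nonneg.mpr hRu)
    exact sub_nonneg.mp h2

lemma inv_antitone {A B : Matrix n n ℂ} (hA : A.PosDef) (hB : B.PosDef)
    (hBA : (B - A).PosSemidef) : (A⁻¹ - B⁻¹).PosSemidef := by
  have hAunit : A * A⁻¹ = 1 := mul_nonsing_inv A (A.isUnit_iff_isUnit_det.mp hA.isUnit)
  have hBunit : B * B⁻¹ = 1 := mul_nonsing_inv B (B.isUnit_iff_isUnit_det.mp hB.isUnit)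
  have hAinvH : (A⁻¹).IsHermitian := hA.inv.isHermitian
  have hBinvH : (B⁻¹).IsHermitian := hB.inv.isHermitian
  refine posSemidef_iff_dotProduct_mulVec.mpr ⟨hAinvH.sub hBinvH, fun x => ?_⟩
  set u : n → ℂ := A⁻¹ *ᵥ x with hu
  set v : n → ℂ := B⁻¹ *ᵥ x with hv
  have hAu : A *ᵥ u = x := by rw [hu, mulVec_mulVec, hAunit, one_mulVec]
  have hBv : B *ᵥ v = x := by rw [hv, mulVec_mulVec, hBunit, one_mulVec]
  have huAu : star u ⬝ᵥ A *ᵥ u = star x ⬝ᵥ A⁻¹ *ᵥ x := by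
    rw [hAu, hu, star_dot_herm hAinvH]
  have hvBv : star v ⬝ᵥ B *ᵥ v = star x ⬝ᵥ B⁻¹ *ᵥ x := by
    rw [hBv, hv, star_dot_herm hBinvH]
  have hcross1 : star u ⬝ᵥ A *ᵥ v = star x ⬝ᵥ B⁻¹ *ᵥ x := by
    rw [← star_dot_herm hA.isHermitian u v, hAu, hv]
  have hcross2 : star v ⬝ᵥ A *ᵥ u = star x ⬝ᵥ B⁻¹ *ᵥ x := by
    rw [hAu, hv, star_dot_herm hBinvH]
  have hvAv : star v ⬝ᵥ A *ᵥ v ≤ star x ⬝ᵥ B⁻¹ *ᵥ x := by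
    have h := hBA.dotProduct_mulVec_nonneg v
    rw [sub_mulVec, dotProduct_sub, sub_nonneg, hvBv] at h
    exact h
  have hq := hA.posSemidef.dotProduct_mulVec_nonneg (u - v)
  rw [quad_sub, hcross1, hcross2, huAu] at hq
  rw [sub_mulVec, dotProduct_sub, sub_nonneg]
  set s : ℂ := star x ⬝ᵥ A⁻¹ *ᵥ x
  set t : ℂ := star x ⬝ᵥ B⁻¹ *ᵥ x
  have key : s - t = (s - t - t + star v ⬝ᵥ A *ᵥ v) + (t - star v ⬝ᵥ A *ᵥ v) := by ring
  have h2 : 0 ≤ s - t := by rw [key]; exact add_nonneg hq (sub_nonneg.mpr hvAv)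
  exact sub_nonneg.mp h2

lemma inv_diag_ge {A : Matrix n n ℂ} (hA : A.PosDef) (i : n) :
    1 / A i i ≤ A⁻¹ i i := by
  have hAunit : A * A⁻¹ = 1 := mul_nonsing_inv A (A.isUnit_iff_isUnit_det.mp hA.isUnit)
  have hAinvH : (A⁻¹).IsHermitian := hA.inv.isHermitian
  set e : n → ℂ := Pi.single i 1 with he
  set a : ℂ := A i i with ha
  set d : ℂ := A⁻¹ i i with hd
  have hae : 0 < a := by
    have h := hA.dotProduct_mulVec_pos (x := e) (fun h0 => by simpa [he, Pi.single_eq_same] using congrFun h0 i)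
    rwa [single_dot] at h
  have hstar_a : star a = a := by
    rw [ha]; conv_lhs => rw [← hA.isHermitian.eq]
    simp [conjTranspose_apply]
  have hane : a ≠ 0 := hae.ne'
  set u : n → ℂ := A⁻¹ *ᵥ e with hu
  have hAu : A *ᵥ u = e := by rw [hu, mulVec_mulVec, hAunit, one_mulVec]
  have h_ee : star e ⬝ᵥ A *ᵥ e = a := single_dot A i i
  have h_eu : star e ⬝ᵥ A *ᵥ u = 1 := by
    rw [hAu, he]; simp [dotProduct, Pi.single_apply]
  have h_ue : star u ⬝ᵥ A *ᵥ e = 1 := by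
    rw [hu, star_dot_herm hAinvH, mulVec_mulVec]
    rw [show A⁻¹ * A = 1 from nonsing_inv_mul A (A.isUnit_iff_isUnit_det.mp hA.isUnit)]
    rw [one_mulVec, he]; simp [dotProduct, Pi.single_apply]
  have h_uu : star u ⬝ᵥ A *ᵥ u = d := by
    rw [hAu, hu, star_dot_herm hAinvH, single_dot]
  have hq := hA.posSemidef.dotProduct_mulVec_nonneg (a⁻¹ • e - u)
  have hstar_ainv : star (a⁻¹ : ℂ) = a⁻¹ := by rw [star_inv₀, hstar_a]
  have hexp : star (a⁻¹ • e - u) ⬝ᵥ A *ᵥ (a⁻¹ • e - u) = d - a⁻¹ := by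
    rw [star_sub, sub_dotProduct, mulVec_sub, dotProduct_sub, dotProduct_sub]
    rw [star_smul, smul_dotProduct, mulVec_smul, dotProduct_smul, dotProduct_smul,
      smul_dotProduct]
    rw [h_ee, h_eu, h_ue, h_uu, hstar_ainv]
    field_simp
    linear_combination (a * a⁻¹ - 1) * (mul_inv_cancel₀ hane)
  rw [hexp] at hq
  rw [one_div]
  exact sub_nonneg.mp hq

lemma one_div_le_one_div {x y : ℂ} (hx : 0 ≤ x) (hxy : x ≤ y) :
    1 / (1 + y) ≤ 1 / (1 + x) := by
  obtain ⟨xr, hxr, rfl⟩ : ∃ r : ℝ, 0 ≤ r ∧ x = (r : ℂ) := by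
    refine ⟨x.re, (Complex.le_def.mp hx).1, ?_⟩
    have := (Complex.le_def.mp hx).2; simp at this
    exact (Complex.ext_iff.mpr ⟨rfl, this.symm⟩)
  have hy0 : 0 ≤ y := le_trans hx hxy
  obtain ⟨yr, hyr, rfl⟩ : ∃ r : ℝ, 0 ≤ r ∧ y = (r : ℂ) := by
    refine ⟨y.re, (Complex.le_def.mp hy0).1, ?_⟩
    have := (Complex.le_def.mp hy0).2; simp at this
    exact (Complex.ext_iff.mpr ⟨rfl, this.symm⟩)
  have hxy' : xr ≤ yr := by exact_mod_cast hxy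
  have h1 : (1 : ℂ) + (xr : ℂ) = ((1 + xr : ℝ) : ℂ) := by push_cast; ring
  have h2 : (1 : ℂ) + (yr : ℂ) = ((1 + yr : ℝ) : ℂ) := by push_cast; ring
  rw [h1, h2, ← Complex.ofReal_one, ← Complex.ofReal_div, ← Complex.ofReal_div]
  rw [Complex.real_le_real]
  exact one_div_le_one_div_of_le (by linarith) (by linarith)

lemma eq_zero_of_trace_conjTranspose_mul (A : Matrix n n ℂ) (h : (Aᴴ * A).trace = 0) :
    A = 0 := by
  have hdiag : ∀ j, (Aᴴ * A) j j = star (fun i => A i j) ⬝ᵥ (fun i => A i j) := by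
    intro j; simp [Matrix.mul_apply, dotProduct, conjTranspose_apply]
  have hnn : ∀ j ∈ Finset.univ, (0:ℂ) ≤ (Aᴴ * A) j j := by
    intro j _; rw [hdiag j]; exact dotProduct_star_self_nonneg _
  rw [Matrix.trace] at h
  have hz := (Finset.sum_eq_zero_iff_of_nonneg hnn).mp h
  ext i j
  have := (dotProduct_star_self_eq_zero).mp ((hdiag j) ▸ hz j (Finset.mem_univ j))
  exact congrFun this i

open scoped MatrixOrder in
lemma mul_eq_zero_of_trace_mul_eq_zero {A B : Matrix n n ℂ}
    (hA : A.PosSemidef) (hB : B.PosSemidef) (h : (A * B).trace = 0) : A * B = 0 := by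
  have hAts : (CFC.sqrt A) * (CFC.sqrt A) = A := CFC.sqrt_mul_sqrt_self A hA.nonneg
  have hBss : (CFC.sqrt B) * (CFC.sqrt B) = B := CFC.sqrt_mul_sqrt_self B hB.nonneg
  have hsH : (CFC.sqrt B)ᴴ = (CFC.sqrt B) := (CFC.sqrt_nonneg B).posSemidef.isHermitian.eq
  have htH : (CFC.sqrt A)ᴴ = (CFC.sqrt A) := (CFC.sqrt_nonneg A).posSemidef.isHermitian.eq
  have hexp : (((CFC.sqrt A) * (CFC.sqrt B))ᴴ * ((CFC.sqrt A) * (CFC.sqrt B))).trace = (A * B).trace := by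
    rw [conjTranspose_mul, hsH, htH]
    calc ((CFC.sqrt B) * (CFC.sqrt A) * ((CFC.sqrt A) * (CFC.sqrt B))).trace
        = ((CFC.sqrt B) * ((CFC.sqrt A) * (CFC.sqrt A) * (CFC.sqrt B))).trace := by congr 1; noncomm_ring
      _ = (((CFC.sqrt A) * (CFC.sqrt A) * (CFC.sqrt B)) * (CFC.sqrt B)).trace := Matrix.trace_mul_comm _ _
      _ = (A * B).trace := by congr 1; rw [Matrix.mul_assoc, hBss, hAts]
  have hts0 : (CFC.sqrt A) * (CFC.sqrt B) = 0 :=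
    eq_zero_of_trace_conjTranspose_mul _ (by rw [hexp, h])
  calc A * B = (CFC.sqrt A) * ((CFC.sqrt A) * (CFC.sqrt B)) * (CFC.sqrt B) := by
        conv_lhs => rw [← hAts, ← hBss]
        noncomm_ring
    _ = 0 := by rw [hts0]; noncomm_ring

lemma gram_expand {ι : Type*} (W Dinv : Matrix n n ℂ) (s : Finset ι)
    (Rf : ι → Matrix n n ℂ) (hRf : ∀ i ∈ s, (Rf i).IsHermitian) (x : ι → ℂ) :
    ∑ i ∈ s, ∑ j ∈ s, star (x i) * (W * Rf i * Dinv * Rf j).trace * x j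
      = (W * (∑ i ∈ s, x i • Rf i)ᴴ * Dinv * (∑ j ∈ s, x j • Rf j)).trace := by
  have h1 : (∑ i ∈ s, x i • Rf i)ᴴ = ∑ i ∈ s, star (x i) • Rf i := by
    rw [conjTranspose_sum]
    exact Finset.sum_congr rfl fun i hi => by rw [conjTranspose_smul, (hRf i hi).eq]
  rw [h1]
  simp only [Finset.mul_sum, Finset.sum_mul, Matrix.smul_mul, Matrix.mul_smul,
    Matrix.trace_sum, Matrix.trace_smul, smul_smul, smul_eq_mul]
  rw [Finset.sum_comm]
  refine Finset.sum_congr rfl fun i hi => Finset.sum_congr rfl fun j hj => ?_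
  ring
end Th4Aux

/-- **Theorem 4.** For channel covariances `R k` (Hermitian PSD), training SNR `ρp > 0`, pilot
length `τ > 0`, data SNR `ρt > 0`, `c = 1/(ρp τ)` and a pilot assignment `π`, with
`C k = ∑_{ℓ : π ℓ = π k} R ℓ + c I`,
`D = ∑ k (R k − R k (C k)⁻¹ R k) + (1/ρt) I`,
`Ω i j = trace ((C i)⁻¹ R i D⁻¹ R j) δ(π i − π j)` and
`ω i = trace ((R i + c I)⁻¹ R i (∑ k (R k − R k (R k + c I)⁻¹ R k) + (1/ρt) I)⁻¹ R i)`: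
the matrix `Ω` is Hermitian positive semidefinite and
`trace ((I + Ω)⁻¹) ≥ ∑ i, 1/(1 + ω i)`, with equality when `trace (R i * R j) = 0` for all
`i ≠ j` with `π i = π j`. -/
theorem mse_sd_lower_bound_and_optimality
    {M K τ' : ℕ} (R : Fin K → Matrix (Fin M) (Fin M) ℂ)
    (hR : ∀ k, (R k).PosSemidef)
    (ρp τ ρt : ℝ) (hρp : 0 < ρp) (hτ : 0 < τ) (hρt : 0 < ρt)
    (c : ℝ) (hc : c = 1 / (ρp * τ))
    (π : Fin K → Fin τ')
    (C : Fin K → Matrix (Fin M) (Fin M) ℂ)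
    (hC : ∀ k, C k = ∑ ℓ ∈ Finset.univ.filter (fun ℓ => π ℓ = π k), R ℓ +
      (c : ℂ) • (1 : Matrix (Fin M) (Fin M) ℂ))
    (D : Matrix (Fin M) (Fin M) ℂ)
    (hD : D = ∑ k, (R k - R k * (C k)⁻¹ * R k) +
      ((1 / ρt : ℝ) : ℂ) • (1 : Matrix (Fin M) (Fin M) ℂ))
    (Om : Matrix (Fin K) (Fin K) ℂ)
    (hOm : ∀ i j, Om i j =
      if π i = π j then ((C i)⁻¹ * R i * D⁻¹ * R j).trace else 0)
    (ω : Fin K → ℂ)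
    (hω : ∀ i, ω i =
      ((R i + (c : ℂ) • (1 : Matrix (Fin M) (Fin M) ℂ))⁻¹ * R i *
        (∑ k, (R k - R k * (R k + (c : ℂ) • (1 : Matrix (Fin M) (Fin M) ℂ))⁻¹ * R k) +
          ((1 / ρt : ℝ) : ℂ) • (1 : Matrix (Fin M) (Fin M) ℂ))⁻¹ * R i).trace) :
    Om.PosSemidef ∧
    ((1 + Om)⁻¹).trace ≥ ∑ i, 1 / (1 + ω i) ∧
    ((∀ i j : Fin K, i ≠ j → π i = π j → (R i * R j).trace = 0) →
      ((1 + Om)⁻¹).trace = ∑ i, 1 / (1 + ω i)) := by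
  have hc0 : 0 < c := by rw [hc]; positivity
  have hρt0 : 0 < 1 / ρt := by positivity
  have hcI : ((c : ℂ) • (1 : Matrix (Fin M) (Fin M) ℂ)).PosDef := Th4Aux.posDef_smul_one hc0
  have hρI : (((1 / ρt : ℝ) : ℂ) • (1 : Matrix (Fin M) (Fin M) ℂ)).PosDef :=
    Th4Aux.posDef_smul_one hρt0
  have hQpd : ∀ k, (R k + (c : ℂ) • (1 : Matrix (Fin M) (Fin M) ℂ)).PosDef :=
    fun k => Matrix.PosDef.posSemidef_add (hR k) hcI
  have hCpd : ∀ k, (C k).PosDef := fun k => by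
    rw [hC k]
    exact Matrix.PosDef.posSemidef_add (Th4Aux.posSemidef_sum _ _ fun ℓ _ => hR ℓ) hcI
  have hCQ : ∀ k, (C k - (R k + (c : ℂ) • (1 : Matrix (Fin M) (Fin M) ℂ))).PosSemidef := by
    intro k
    have hk : k ∈ Finset.univ.filter (fun ℓ => π ℓ = π k) := by simp
    have heq : C k - (R k + (c : ℂ) • (1 : Matrix (Fin M) (Fin M) ℂ))
        = ∑ ℓ ∈ (Finset.univ.filter (fun ℓ => π ℓ = π k)).erase k, R ℓ := by
      rw [hC k, ← Finset.sum_erase_add _ _ hk]; abel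
    rw [heq]
    exact Th4Aux.posSemidef_sum _ _ fun ℓ _ => hR ℓ
  have hCR : ∀ k, (C k - R k).PosSemidef := by
    intro k
    have heq : C k - R k = (C k - (R k + (c : ℂ) • (1 : Matrix (Fin M) (Fin M) ℂ)))
        + (c : ℂ) • (1 : Matrix (Fin M) (Fin M) ℂ) := by abel
    rw [heq]
    exact (hCQ k).add hcI.posSemidef
  have hSC : ∀ k, (R k - R k * (C k)⁻¹ * R k).PosSemidef :=
    fun k => Th4Aux.schur_psd (hR k) (hCpd k) (hCR k)
  have hSQ : ∀ k, (R k - R k * (R k + (c : ℂ) • (1 : Matrix (Fin M) (Fin M) ℂ))⁻¹ * R k).PosSemidef := by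
    intro k
    refine Th4Aux.schur_psd (hR k) (hQpd k) ?_
    have heq : (R k + (c : ℂ) • (1 : Matrix (Fin M) (Fin M) ℂ)) - R k
        = (c : ℂ) • (1 : Matrix (Fin M) (Fin M) ℂ) := by abel
    rw [heq]; exact hcI.posSemidef
  have hQC : ∀ k, ((R k + (c : ℂ) • (1 : Matrix (Fin M) (Fin M) ℂ))⁻¹ - (C k)⁻¹).PosSemidef :=
    fun k => Th4Aux.inv_antitone (hQpd k) (hCpd k) (hCQ k)
  set D0 : Matrix (Fin M) (Fin M) ℂ :=
    ∑ k, (R k - R k * (R k + (c : ℂ) • (1 : Matrix (Fin M) (Fin M) ℂ))⁻¹ * R k) +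
      ((1 / ρt : ℝ) : ℂ) • (1 : Matrix (Fin M) (Fin M) ℂ) with hD0def
  have hDpd : D.PosDef := by
    rw [hD]
    exact Matrix.PosDef.posSemidef_add (Th4Aux.posSemidef_sum _ _ fun k _ => hSC k) hρI
  have hD0pd : D0.PosDef := by
    rw [hD0def]
    exact Matrix.PosDef.posSemidef_add (Th4Aux.posSemidef_sum _ _ fun k _ => hSQ k) hρI
  have hDD0 : (D - D0).PosSemidef := by
    have heq : D - D0 = ∑ k,
        R k * ((R k + (c : ℂ) • (1 : Matrix (Fin M) (Fin M) ℂ))⁻¹ - (C k)⁻¹) * R k := by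
      rw [hD, hD0def, add_sub_add_right_eq_sub, ← Finset.sum_sub_distrib]
      exact Finset.sum_congr rfl fun k _ => by noncomm_ring
    rw [heq]
    exact Th4Aux.posSemidef_sum _ _ fun k _ =>
      Th4Aux.sandwich_psd (hR k).isHermitian (hQC k)
  have hD0D : (D0⁻¹ - D⁻¹).PosSemidef := Th4Aux.inv_antitone hD0pd hDpd hDD0
  have hDinvH : (D⁻¹).IsHermitian := hDpd.inv.isHermitian
  have hCsym : ∀ {i j : Fin K}, π i = π j → C i = C j := by
    intro i j h
    rw [hC i, hC j]
    simp only [h]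
  -- Hermitian
  have hOmH : Om.IsHermitian := by
    rw [Matrix.IsHermitian]
    ext i j
    rw [conjTranspose_apply, hOm j i, hOm i j]
    by_cases hπ : π i = π j
    · rw [if_pos hπ.symm, if_pos hπ, ← Matrix.trace_conjTranspose]
      have h1 : ((C j)⁻¹ * R j * D⁻¹ * R i)ᴴ = R i * D⁻¹ * R j * (C j)⁻¹ := by
        simp only [conjTranspose_mul]
        rw [(hR i).isHermitian.eq, (hR j).isHermitian.eq, hDinvH.eq,
          (hCpd j).inv.isHermitian.eq]
        noncomm_ring
      rw [h1, Matrix.trace_mul_comm, ← hCsym hπ]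
      congr 1
      noncomm_ring
    · rw [if_neg (fun h => hπ h.symm), if_neg hπ, star_zero]
  -- PSD
  have hOmPSD : Om.PosSemidef := by
    refine posSemidef_iff_dotProduct_mulVec.mpr ⟨hOmH, fun x => ?_⟩
    have e1 : star x ⬝ᵥ Om *ᵥ x = ∑ i, ∑ j, star (x i) * Om i j * x j := by
      simp [dotProduct, mulVec, Finset.mul_sum, mul_assoc]
    have e2 : ∀ i, ∑ j, star (x i) * Om i j * x j
        = ∑ j ∈ Finset.univ.filter (fun ℓ => π ℓ = π i),
            star (x i) * ((C i)⁻¹ * R i * D⁻¹ * R j).trace * x j := by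
      intro i
      rw [Finset.sum_filter]
      refine Finset.sum_congr rfl fun j _ => ?_
      rw [hOm i j]
      by_cases h : π j = π i
      · rw [if_pos h, if_pos h.symm]
      · rw [if_neg (fun hh => h hh.symm), if_neg h, mul_zero, zero_mul]
    have e3 : star x ⬝ᵥ Om *ᵥ x = ∑ g : Fin τ',
        ∑ i ∈ Finset.univ.filter (fun ℓ => π ℓ = g),
          ∑ j ∈ Finset.univ.filter (fun ℓ => π ℓ = g),
            star (x i) * (((∑ ℓ ∈ Finset.univ.filter (fun ℓ => π ℓ = g), R ℓ +
              (c : ℂ) • (1 : Matrix (Fin M) (Fin M) ℂ)))⁻¹ * R i * D⁻¹ * R j).trace * x j := by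
      rw [e1, ← Finset.sum_fiberwise Finset.univ π (fun i => ∑ j, star (x i) * Om i j * x j)]
      refine Finset.sum_congr rfl fun g _ => ?_
      refine Finset.sum_congr rfl fun i hi => ?_
      have hig : π i = g := by simpa using hi
      rw [e2 i, hC i, hig]
    rw [e3]
    refine Finset.sum_nonneg fun g _ => ?_
    set Cg : Matrix (Fin M) (Fin M) ℂ := ∑ ℓ ∈ Finset.univ.filter (fun ℓ => π ℓ = g), R ℓ +
      (c : ℂ) • (1 : Matrix (Fin M) (Fin M) ℂ) with hCgdef
    have hCgpd : Cg.PosDef := by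
      rw [hCgdef]
      exact Matrix.PosDef.posSemidef_add (Th4Aux.posSemidef_sum _ _ fun ℓ _ => hR ℓ) hcI
    rw [Th4Aux.gram_expand Cg⁻¹ D⁻¹ _ R (fun i _ => (hR i).isHermitian) x]
    set Y : Matrix (Fin M) (Fin M) ℂ :=
      ∑ j ∈ Finset.univ.filter (fun ℓ => π ℓ = g), x j • R j with hY
    have heq : Cg⁻¹ * Yᴴ * D⁻¹ * Y = Cg⁻¹ * (Yᴴ * D⁻¹ * Y) := by
      rw [Matrix.mul_assoc, Matrix.mul_assoc, Matrix.mul_assoc]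
    rw [heq, Matrix.trace_mul_comm]
    exact Th4Aux.trace_mul_nonneg
      (hDpd.inv.posSemidef.conjTranspose_mul_mul_same Y) hCgpd.inv.posSemidef
  -- diagonal bounds
  have hA1 : (1 + Om).PosDef := Matrix.PosDef.add_posSemidef Matrix.PosDef.one hOmPSD
  have hdiagOm : ∀ i, Om i i = ((C i)⁻¹ * R i * D⁻¹ * R i).trace := fun i => by
    rw [hOm i i, if_pos rfl]
  have hOm_nonneg : ∀ i, 0 ≤ Om i i := by
    intro i
    rw [hdiagOm i]
    have heq : (C i)⁻¹ * R i * D⁻¹ * R i = (C i)⁻¹ * (R i * D⁻¹ * R i) := by noncomm_ring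
    rw [heq, Matrix.trace_mul_comm]
    exact Th4Aux.trace_mul_nonneg
      (Th4Aux.sandwich_psd (hR i).isHermitian hDpd.inv.posSemidef) (hCpd i).inv.posSemidef
  have hOm_le : ∀ i, Om i i ≤ ω i := by
    intro i
    rw [hdiagOm i, hω i]
    have s1 : ((C i)⁻¹ * R i * D⁻¹ * R i).trace ≤ ((C i)⁻¹ * R i * D0⁻¹ * R i).trace := by
      rw [← sub_nonneg, ← Matrix.trace_sub]
      have heq : (C i)⁻¹ * R i * D0⁻¹ * R i - (C i)⁻¹ * R i * D⁻¹ * R i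
          = (C i)⁻¹ * (R i * (D0⁻¹ - D⁻¹) * R i) := by noncomm_ring
      rw [heq, Matrix.trace_mul_comm]
      exact Th4Aux.trace_mul_nonneg
        (Th4Aux.sandwich_psd (hR i).isHermitian hD0D) (hCpd i).inv.posSemidef
    have s2 : ((C i)⁻¹ * R i * D0⁻¹ * R i).trace
        ≤ ((R i + (c : ℂ) • (1 : Matrix (Fin M) (Fin M) ℂ))⁻¹ * R i * D0⁻¹ * R i).trace := by
      rw [← sub_nonneg, ← Matrix.trace_sub]
      have heq : (R i + (c : ℂ) • (1 : Matrix (Fin M) (Fin M) ℂ))⁻¹ * R i * D0⁻¹ * R i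
          - (C i)⁻¹ * R i * D0⁻¹ * R i
          = ((R i + (c : ℂ) • (1 : Matrix (Fin M) (Fin M) ℂ))⁻¹ - (C i)⁻¹)
            * (R i * D0⁻¹ * R i) := by noncomm_ring
      rw [heq]
      exact Th4Aux.trace_mul_nonneg (hQC i)
        (Th4Aux.sandwich_psd (hR i).isHermitian hD0pd.inv.posSemidef)
    exact le_trans s1 s2
  refine ⟨hOmPSD, ?_, ?_⟩
  · rw [ge_iff_le, Matrix.trace]
    refine Finset.sum_le_sum fun i _ => ?_
    have h1 : 1 / (1 + ω i) ≤ 1 / (1 + Om i i) :=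
      Th4Aux.one_div_le_one_div (hOm_nonneg i) (hOm_le i)
    have h2 : 1 / ((1 + Om) i i) ≤ (1 + Om)⁻¹ i i := Th4Aux.inv_diag_ge hA1 i
    have h3 : (1 + Om) i i = 1 + Om i i := by
      simp [Matrix.add_apply, Matrix.one_apply_eq]
    rw [h3] at h2
    exact le_trans h1 h2
  · intro horth
    have hRR : ∀ i j, i ≠ j → π i = π j → R i * R j = 0 := fun i j hij hπ =>
      Th4Aux.mul_eq_zero_of_trace_mul_eq_zero (hR i) (hR j) (horth i j hij hπ)
    have hQcomm : ∀ k, (R k + (c : ℂ) • (1 : Matrix (Fin M) (Fin M) ℂ))⁻¹ * R k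
        = R k * (R k + (c : ℂ) • (1 : Matrix (Fin M) (Fin M) ℂ))⁻¹ := by
      intro k
      have hdet : IsUnit (R k + (c : ℂ) • (1 : Matrix (Fin M) (Fin M) ℂ)).det :=
        (Matrix.isUnit_iff_isUnit_det _).mp (hQpd k).isUnit
      have h1 : (R k + (c : ℂ) • (1 : Matrix (Fin M) (Fin M) ℂ)) * R k
          = R k * (R k + (c : ℂ) • (1 : Matrix (Fin M) (Fin M) ℂ)) := by
        rw [add_mul, mul_add, Matrix.smul_mul, Matrix.mul_smul, Matrix.one_mul, Matrix.mul_one]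
      calc (R k + (c : ℂ) • (1 : Matrix (Fin M) (Fin M) ℂ))⁻¹ * R k
          = (R k + (c : ℂ) • 1)⁻¹ * R k *
              ((R k + (c : ℂ) • 1) * (R k + (c : ℂ) • 1)⁻¹) := by
            rw [mul_nonsing_inv _ hdet, Matrix.mul_one]
        _ = (R k + (c : ℂ) • 1)⁻¹ * (R k * (R k + (c : ℂ) • 1)) * (R k + (c : ℂ) • 1)⁻¹ := by
            noncomm_ring
        _ = (R k + (c : ℂ) • 1)⁻¹ * ((R k + (c : ℂ) • 1) * R k) * (R k + (c : ℂ) • 1)⁻¹ := by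
            rw [← h1]
        _ = (R k + (c : ℂ) • 1)⁻¹ * (R k + (c : ℂ) • 1) * (R k * (R k + (c : ℂ) • 1)⁻¹) := by
            noncomm_ring
        _ = R k * (R k + (c : ℂ) • 1)⁻¹ := by
            rw [nonsing_inv_mul _ hdet, Matrix.one_mul]
    have hCinvR : ∀ k, (C k)⁻¹ * R k
        = (R k + (c : ℂ) • (1 : Matrix (Fin M) (Fin M) ℂ))⁻¹ * R k := by
      intro k
      have hdetC : IsUnit (C k).det := (Matrix.isUnit_iff_isUnit_det _).mp (hCpd k).isUnit
      have hdetQ : IsUnit (R k + (c : ℂ) • (1 : Matrix (Fin M) (Fin M) ℂ)).det :=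
        (Matrix.isUnit_iff_isUnit_det _).mp (hQpd k).isUnit
      have hk : k ∈ Finset.univ.filter (fun ℓ => π ℓ = π k) := by simp
      have hmain : C k * ((R k + (c : ℂ) • (1 : Matrix (Fin M) (Fin M) ℂ))⁻¹ * R k) = R k := by
        rw [hC k, add_mul, Finset.sum_mul, ← Finset.sum_erase_add _ _ hk]
        have hzero : ∀ ℓ ∈ (Finset.univ.filter (fun ℓ => π ℓ = π k)).erase k,
            R ℓ * ((R k + (c : ℂ) • (1 : Matrix (Fin M) (Fin M) ℂ))⁻¹ * R k) = 0 := by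
          intro ℓ hℓ
          have hℓk : ℓ ≠ k := Finset.ne_of_mem_erase hℓ
          have hℓπ : π ℓ = π k := by
            have := Finset.mem_of_mem_erase hℓ
            simpa using this
          rw [hQcomm k, ← Matrix.mul_assoc, hRR ℓ k hℓk hℓπ, Matrix.zero_mul]
        rw [Finset.sum_eq_zero hzero, zero_add]
        have hs : ((c : ℂ) • (1 : Matrix (Fin M) (Fin M) ℂ))
            * ((R k + (c : ℂ) • (1 : Matrix (Fin M) (Fin M) ℂ))⁻¹ * R k)
            = (c : ℂ) • ((R k + (c : ℂ) • (1 : Matrix (Fin M) (Fin M) ℂ))⁻¹ * R k) := by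
          rw [Matrix.smul_mul, Matrix.one_mul]
        rw [hs]
        have hcomb : R k * ((R k + (c : ℂ) • (1 : Matrix (Fin M) (Fin M) ℂ))⁻¹ * R k)
            + (c : ℂ) • ((R k + (c : ℂ) • (1 : Matrix (Fin M) (Fin M) ℂ))⁻¹ * R k)
            = (R k + (c : ℂ) • (1 : Matrix (Fin M) (Fin M) ℂ))
              * ((R k + (c : ℂ) • (1 : Matrix (Fin M) (Fin M) ℂ))⁻¹ * R k) := by
          rw [add_mul, Matrix.smul_mul, Matrix.one_mul]
        rw [hcomb, ← Matrix.mul_assoc, mul_nonsing_inv _ hdetQ, Matrix.one_mul]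
      calc (C k)⁻¹ * R k
          = (C k)⁻¹ * (C k * ((R k + (c : ℂ) • (1 : Matrix (Fin M) (Fin M) ℂ))⁻¹ * R k)) := by
            rw [hmain]
        _ = (R k + (c : ℂ) • (1 : Matrix (Fin M) (Fin M) ℂ))⁻¹ * R k := by
            rw [← Matrix.mul_assoc, nonsing_inv_mul _ hdetC, Matrix.one_mul]
    have hDeq : D = D0 := by
      rw [hD, hD0def]
      congr 1
      refine Finset.sum_congr rfl fun k _ => ?_
      rw [show R k * (C k)⁻¹ * R k = R k * ((C k)⁻¹ * R k) from Matrix.mul_assoc _ _ _,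
        hCinvR k, ← Matrix.mul_assoc]
    have hOmdiag : Om = Matrix.diagonal ω := by
      ext i j
      rw [hOm i j]
      rcases eq_or_ne i j with rfl | hij
      · rw [if_pos rfl, Matrix.diagonal_apply_eq, hω i]
        rw [show (C i)⁻¹ * R i * D⁻¹ * R i = ((C i)⁻¹ * R i) * D⁻¹ * R i from rfl,
          hCinvR i, hDeq]
      · rw [Matrix.diagonal_apply_ne _ hij]
        by_cases hπ : π i = π j
        · rw [if_pos hπ]
          rw [show (C i)⁻¹ * R i * D⁻¹ * R j = ((C i)⁻¹ * R i) * D⁻¹ * R j from rfl,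
            hCinvR i, Matrix.trace_mul_cycle]
          rw [show R j * ((R i + (c : ℂ) • (1 : Matrix (Fin M) (Fin M) ℂ))⁻¹ * R i)
              = R j * R i * (R i + (c : ℂ) • (1 : Matrix (Fin M) (Fin M) ℂ))⁻¹ from by
            rw [hQcomm i, ← Matrix.mul_assoc]]
          rw [hRR j i hij.symm hπ.symm, Matrix.zero_mul, Matrix.zero_mul, Matrix.trace_zero]
        · rw [if_neg hπ]
    have hne : ∀ i, (1 : ℂ) + ω i ≠ 0 := by
      intro i
      have h0 : (0:ℂ) ≤ ω i := le_trans (hOm_nonneg i) (hOm_le i)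
      have h1 : (0:ℂ) < 1 + ω i := lt_of_lt_of_le zero_lt_one (le_add_of_nonneg_right h0)
      exact h1.ne'
    have hdiagsum : (1 : Matrix (Fin K) (Fin K) ℂ) + Matrix.diagonal ω
        = Matrix.diagonal (fun i => 1 + ω i) := by
      rw [← Matrix.diagonal_one, Matrix.diagonal_add]
    have hinv : (Matrix.diagonal (fun i => 1 + ω i))⁻¹
        = Matrix.diagonal (fun i => (1 + ω i)⁻¹) := by
      apply Matrix.inv_eq_right_inv
      rw [Matrix.diagonal_mul_diagonal]
      have : (fun i => (1 + ω i) * (1 + ω i)⁻¹) = fun _ => (1:ℂ) := by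
        funext i; exact mul_inv_cancel₀ (hne i)
      rw [this, Matrix.diagonal_one]
    rw [hOmdiag, hdiagsum, hinv, Matrix.trace_diagonal]
    exact Finset.sum_congr rfl fun i _ => (one_div _).symm
end
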